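/- arXiv:0911.4351 — 3 statements merged into one kernel-verified Lean document; each statement's English description precedes it below -/
import Mathlib

section
/- For every integer 3 ≤ d ≤ n−1, if G = (V,E) is a d-regular graph on n vertices, then there exists a subgraph H ⊆ G with maximum degree Δ(H) ≤ d/2 + 4√(d·ln d) such that the graph G − H is disconnected. -/
open SimpleGraph Real
open scoped Classical

variable {V : Type*}

noncomputable def degN (H : SimpleGraph V) (v : V) : ℕ := (H.neighborSet v).ncard

noncomputable def maxDeg (H : SimpleGraph V) : ℕ := sSup (Set.range (degN H))

noncomputable def minDeg (H : SimpleGraph V) : ℕ := sInf (Set.range (degN H))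

noncomputable def localResilience [Fintype V] (G : SimpleGraph V)
    (P : SimpleGraph V → Prop) : ℕ :=
  sInf {r | ∃ H ≤ G, maxDeg H = r ∧ ¬ P (G \ H)}

def EdgeConnK [Fintype V] (G : SimpleGraph V) (k : ℕ) : Prop :=
  ∀ s : Finset (Sym2 V), s.card < k → (G.deleteEdges ↑s).Connected

def VertConnK [Fintype V] (G : SimpleGraph V) (k : ℕ) : Prop :=
  ∀ S : Finset V, S.card < k → (G.induce ((↑S : Set V)ᶜ)).Connected

def IsReg (G : SimpleGraph V) (d : ℕ) : Prop := ∀ v, degN G v = d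

noncomputable def quadForm [Fintype V] (G : SimpleGraph V) (x : V → ℝ) : ℝ :=
  ∑ u, ∑ v, if G.Adj u v then x u * x v else 0

/-- `(n,d,lam)`-graph: `d`-regular and all eigenvalues of the adjacency matrix other
than the top one (i.e. on the orthogonal complement of the all-ones vector) are at
most `lam` in absolute value. -/
def IsNDL [Fintype V] (G : SimpleGraph V) (d : ℕ) (lam : ℝ) : Prop :=
  IsReg G d ∧ ∀ x : V → ℝ, (∑ v, x v) = 0 → |quadForm G x| ≤ lam * ∑ v, (x v) ^ 2

noncomputable def edgesWithin (G : SimpleGraph V) (U : Set V) : ℕ :=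
  {e ∈ G.edgeSet | ∀ v ∈ e, v ∈ U}.ncard

noncomputable def edgesBetween (G : SimpleGraph V) (U W : Set V) : ℕ :=
  {p : V × V | p.1 ∈ U ∧ p.2 ∈ W ∧ G.Adj p.1 p.2}.ncard

def nbhd (G : SimpleGraph V) (S : Set V) : Set V :=
  {v | v ∉ S ∧ ∃ u ∈ S, G.Adj u v}

noncomputable def maxPathLength (G : SimpleGraph V) : ℕ :=
  sSup {n | ∃ (u v : V) (p : G.Walk u v), p.IsPath ∧ p.length = n}

def Booster [Fintype V] (G : SimpleGraph V) (u v : V) : Prop :=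
  u ≠ v ∧ ¬ G.Adj u v ∧
    ((G ⊔ fromEdgeSet {s(u, v)}).IsHamiltonian ∨
      maxPathLength G < maxPathLength (G ⊔ fromEdgeSet {s(u, v)}))

def BSet [Fintype V] (G : SimpleGraph V) (v : V) : Set V := {w | Booster G v w}

def boosterSet [Fintype V] (G : SimpleGraph V) : Set (Sym2 V) :=
  {e | ∃ u v, e = s(u, v) ∧ Booster G u v}

def IsExpander [Fintype V] (G : SimpleGraph V) (ε : ℝ) : Prop :=
  (∀ S : Set V, (S.ncard : ℝ) < ε * (Fintype.card V) →
      10 * S.ncard ≤ (nbhd G S).ncard) ∧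
  (∀ S : Set V, ε * (Fintype.card V) ≤ (S.ncard : ℝ) →
      (S.ncard : ℝ) ≤ 2 * ε * (Fintype.card V) →
      (1 + 12 * ε) * (Fintype.card V) / 2 ≤ ((nbhd G S).ncard : ℝ))

def IsMagnifier (G : SimpleGraph V) (k ℓ : ℝ) : Prop :=
  ∀ U : Set V, (U.ncard : ℝ) ≤ k → ℓ * U.ncard ≤ ((nbhd G U).ncard : ℝ)

def QuasiRandom [Fintype V] (G : SimpleGraph V) (d : ℕ) (ε : ℝ) : Prop :=
  ((d : ℝ) / 2 ≤ (minDeg G : ℝ) ∧ (maxDeg G : ℝ) ≤ 2 * d) ∧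
  (∀ U : Set V, (U.ncard : ℝ) < ε ^ 3 * (Fintype.card V) / 14 →
      (edgesWithin G U : ℝ) ≤ ε ^ 3 * d * U.ncard / 14) ∧
  (∀ U W : Set V, Disjoint U W →
      ε ^ 3 / 160 * (Fintype.card V) ≤ (U.ncard : ℝ) →
      (U.ncard : ℝ) < 2 * (ε ^ 3 / 160) * (Fintype.card V) →
      (Fintype.card V : ℝ) / 2 * (1 - ε / 2 - 4 * (ε ^ 3 / 160)) ≤ (W.ncard : ℝ) →
      (d : ℝ) * (1 - ε / 4) / (Fintype.card V) * (U.ncard * W.ncard)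
          - (1 - ε) * (d : ℝ) / 2 * U.ncard ≤ (edgesBetween G U W : ℝ))

def bipartiteBetween (G : SimpleGraph V) (S : Set V) : SimpleGraph V where
  Adj u v := G.Adj u v ∧ ((u ∈ S ∧ v ∉ S) ∨ (u ∉ S ∧ v ∈ S))
  symm := by
    constructor
    intro u v h
    exact ⟨h.1.symm, h.2.elim (fun hh => Or.inr ⟨hh.2, hh.1⟩) (fun hh => Or.inl ⟨hh.2, hh.1⟩)⟩
  loopless := by
    constructor
    intro v h
    exact G.irrefl h.1

def LegalStrategy [Fintype V] (G : SimpleGraph V)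
    (σ : Finset (Sym2 V) × Finset (Sym2 V) → Sym2 V) : Prop :=
  ∀ s : Finset (Sym2 V) × Finset (Sym2 V),
    (∃ e ∈ G.edgeSet, e ∉ s.1 ∧ e ∉ s.2) →
    σ s ∈ G.edgeSet ∧ σ s ∉ s.1 ∧ σ s ∉ s.2

def playMB [DecidableEq V]
    (σ τ : Finset (Sym2 V) × Finset (Sym2 V) → Sym2 V) :
    ℕ → Finset (Sym2 V) × Finset (Sym2 V)
  | 0 => (∅, ∅)
  | n + 1 =>
      let p := playMB σ τ n
      let q : Finset (Sym2 V) × Finset (Sym2 V) := (p.1, insert (τ p) p.2)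
      (insert (σ q) q.1, q.2)


namespace Stmt2Aux

open Finset

variable {V : Type*}

noncomputable def nbF [Fintype V] (G : SimpleGraph V) (v : V) : Finset V :=
  univ.filter (fun u => G.Adj v u)

noncomputable def nbc [Fintype V] (G : SimpleGraph V) (v : V) : Finset V :=
  insert v (nbF G v)

noncomputable def crossCnt [Fintype V] (G : SimpleGraph V) (f : V → Bool) (v : V) : ℕ :=
  ((nbF G v).filter (fun u => f u ≠ f v)).card

noncomputable def tau (d : ℕ) : ℝ := d / 2 + 4 * Real.sqrt (d * Real.log d)

def Bad [Fintype V] (G : SimpleGraph V) (d : ℕ) (v : V) (f : V → Bool) : Prop :=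
  tau d < crossCnt G f v

noncomputable def mixf (P : Finset V) (f g : V → Bool) : V → Bool :=
  fun x => if x ∈ P then f x else g x

lemma mixf_mixf (P : Finset V) (f g : V → Bool) :
    mixf P (mixf P f g) (mixf P g f) = f := by
  funext x
  by_cases h : x ∈ P <;> simp [mixf, h]

lemma indep_count [Fintype V] (P : Finset V) (E F : (V → Bool) → Prop)
    (hE : ∀ f g, (∀ x ∈ P, f x = g x) → E f → E g)
    (hF : ∀ f g, (∀ x ∉ P, f x = g x) → F f → F g) :
    ((univ.filter fun f => E f ∧ F f).card) * ((univ : Finset (V → Bool)).card)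
      = (univ.filter E).card * (univ.filter F).card := by
  classical
  rw [← Finset.card_product, ← Finset.card_product]
  apply Finset.card_bij' (i := fun p _ => (mixf P p.1 p.2, mixf P p.2 p.1))
    (j := fun p _ => (mixf P p.1 p.2, mixf P p.2 p.1))
  · rintro ⟨f, g⟩ hp
    simp only [Finset.mem_product, Finset.mem_filter, Finset.mem_univ, true_and] at hp ⊢
    obtain ⟨⟨hEf, hFf⟩, -⟩ := hp
    constructor
    · exact hE f _ (fun x hx => by simp [mixf, hx]) hEf
    · exact hF f _ (fun x hx => by simp [mixf, hx]) hFf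
  · rintro ⟨f, g⟩ hp
    simp only [Finset.mem_product, Finset.mem_filter, Finset.mem_univ, true_and, and_true] at hp ⊢
    obtain ⟨hEf, hFg⟩ := hp
    constructor
    · exact hE f _ (fun x hx => by simp [mixf, hx]) hEf
    · exact hF g _ (fun x hx => by simp [mixf, hx]) hFg
  · rintro ⟨f, g⟩ _
    simp only [Prod.mk.injEq]
    exact ⟨mixf_mixf P f g, mixf_mixf P g f⟩
  · rintro ⟨f, g⟩ _
    simp only [Prod.mk.injEq]
    exact ⟨mixf_mixf P f g, mixf_mixf P g f⟩


lemma not_mem_nbF [Fintype V] (G : SimpleGraph V) (v : V) : v ∉ nbF G v := by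
  simp [nbF]

lemma count_side [Fintype V] (G : SimpleGraph V) (d : ℕ) (v : V)
    (hcard : (nbF G v).card = d) (lam : ℝ) (hlam : 1 ≤ lam) (s : ℕ)
    (hs : ∀ f : V → Bool, Bad G d v f → s ≤ crossCnt G f v) (b₀ : Bool) :
    ((univ.filter (fun f : V → Bool => Bad G d v f ∧ f v = b₀)).card : ℝ) * lam ^ s
      ≤ (1 + lam) ^ d * 2 ^ (Fintype.card V - 1 - d) := by
  classical
  have hlam0 : (0:ℝ) ≤ lam := le_trans zero_le_one hlam
  set N := nbF G v with hN
  have hvN : v ∉ N := not_mem_nbF G v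
  set F : V → Bool → ℝ := fun u b =>
    if u ∈ N then (if b = !b₀ then lam else 1) else if u = v then (if b = b₀ then 1 else 0) else 1
    with hF
  have hFnn : ∀ u b, 0 ≤ F u b := by
    intro u b
    simp only [hF]
    split_ifs <;> norm_num [hlam0]
  -- product formula for f with f v = b₀
  have hprod : ∀ f : V → Bool, f v = b₀ → (∏ u, F u (f u)) = lam ^ (crossCnt G f v) := by
    intro f hfv
    rw [← Finset.prod_sdiff (Finset.subset_univ N)]
    have h1 : (∏ u ∈ univ \ N, F u (f u)) = 1 := by
      apply Finset.prod_eq_one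
      intro u hu
      rw [Finset.mem_sdiff] at hu
      by_cases huv : u = v
      · subst huv
        simp [hF, hu.2, hfv]
      · simp [hF, hu.2, huv]
    have h2 : (∏ u ∈ N, F u (f u)) = lam ^ (crossCnt G f v) := by
      have : ∀ u ∈ N, F u (f u) = if f u ≠ f v then lam else 1 := by
        intro u hu
        have : (f u = !b₀) = (f u ≠ f v) := by
          rw [hfv]; cases f u <;> cases b₀ <;> simp
        simp [hF, hu, this]
      rw [Finset.prod_congr rfl this, Finset.prod_ite, Finset.prod_const, Finset.prod_const,
        one_pow, mul_one]
      rfl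
    rw [h1, h2, one_mul]
  -- sum over all f
  have hsum : (∑ f : V → Bool, ∏ u, F u (f u))
      = (1 + lam) ^ d * 2 ^ (Fintype.card V - 1 - d) := by
    rw [← Fintype.prod_sum F]
    have hstep : ∀ u : V, (∑ b : Bool, F u b)
        = if u ∈ N then (1 + lam) else if u = v then 1 else 2 := by
      intro u
      rw [Fintype.sum_bool]
      by_cases hu : u ∈ N
      · cases b₀ <;> simp [hF, hu] <;> ring
      · by_cases huv : u = v
        · cases b₀ <;> simp [hF, hu, huv, hvN]
        · simp [hF, hu, huv]; norm_num
    rw [Finset.prod_congr rfl (fun u _ => hstep u)]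
    have hsub : nbc G v ⊆ univ := Finset.subset_univ _
    rw [← Finset.prod_sdiff hsub]
    have hc1 : (∏ u ∈ nbc G v, (if u ∈ N then (1 + lam) else if u = v then 1 else 2))
        = (1 + lam) ^ d := by
      rw [nbc, Finset.prod_insert hvN]
      have h3 : ∀ u ∈ N, (if u ∈ N then (1 + lam) else if u = v then 1 else (2:ℝ)) = 1 + lam :=
        fun u hu => by simp [hu]
      rw [Finset.prod_congr rfl h3, Finset.prod_const, hcard]
      simp [hvN]
    have hc2 : (∏ u ∈ univ \ nbc G v, (if u ∈ N then (1 + lam) else if u = v then 1 else 2))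
        = 2 ^ (Fintype.card V - 1 - d) := by
      have : ∀ u ∈ univ \ nbc G v, (if u ∈ N then (1 + lam) else if u = v then 1 else (2:ℝ)) = 2 := by
        intro u hu
        rw [Finset.mem_sdiff, nbc, Finset.mem_insert] at hu
        push_neg at hu
        simp [hN, hu.2.1, hu.2.2]
      rw [Finset.prod_congr rfl this, Finset.prod_const]
      congr 1
      rw [Finset.card_sdiff_of_subset hsub, Finset.card_univ, nbc, Finset.card_insert_of_notMem hvN, hcard]
      omega
    rw [hc1, hc2, mul_comm]
  -- lower bound the sum by the filtered sum
  have hlb : ((univ.filter (fun f : V → Bool => Bad G d v f ∧ f v = b₀)).card : ℝ) * lam ^ s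
      ≤ ∑ f : V → Bool, ∏ u, F u (f u) := by
    calc ((univ.filter (fun f : V → Bool => Bad G d v f ∧ f v = b₀)).card : ℝ) * lam ^ s
        = ∑ _f ∈ univ.filter (fun f : V → Bool => Bad G d v f ∧ f v = b₀), lam ^ s := by
          rw [Finset.sum_const, nsmul_eq_mul]
      _ ≤ ∑ f ∈ univ.filter (fun f : V → Bool => Bad G d v f ∧ f v = b₀), ∏ u, F u (f u) := by
          apply Finset.sum_le_sum
          intro f hf
          rw [Finset.mem_filter] at hf
          rw [hprod f hf.2.2]
          exact pow_le_pow_right₀ hlam (hs f hf.2.1)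
      _ ≤ ∑ f : V → Bool, ∏ u, F u (f u) :=
          Finset.sum_le_sum_of_subset_of_nonneg (Finset.filter_subset _ _)
            (fun f _ _ => Finset.prod_nonneg fun u _ => hFnn u _)
  rw [← hsum]
  exact hlb

lemma numeric_core (d : ℕ) (hd : 3 ≤ d) (s : ℕ) (hsge : tau d ≤ (s:ℝ))
    (ht : 4 * Real.sqrt ((d:ℝ) * Real.log d) ≤ (d:ℝ)/2) :
    (1 + (1 + 4 * Real.sqrt ((d:ℝ) * Real.log d) / (2*d))) ^ d
      ≤ 1/(d:ℝ)^4 * 2^d * (1 + 4 * Real.sqrt ((d:ℝ) * Real.log d) / (2*d)) ^ s := by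
  have hd' : (3:ℝ) ≤ (d:ℝ) := by exact_mod_cast hd
  have hdpos : (0:ℝ) < d := by linarith
  have hL : 0 < Real.log d := Real.log_pos (by linarith)
  set L := Real.log d with hLdef
  set t := 4 * Real.sqrt ((d:ℝ) * L) with htdef
  have ht0 : 0 ≤ t := by positivity
  have ht2 : t^2 = 16 * ((d:ℝ) * L) := by
    rw [htdef, mul_pow, Real.sq_sqrt (by positivity)]
    norm_num
  set δ := t / (2*(d:ℝ)) with hδdef
  have hδ0 : 0 ≤ δ := by positivity
  have hδ4 : δ ≤ 1/4 := by
    rw [hδdef, div_le_iff₀ (by linarith)]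
    linarith
  -- rewrite LHS
  have hsplit : (1 + (1 + δ)) = 2 * (1 + δ/2) := by ring
  rw [hsplit, mul_pow]
  have h2d : (0:ℝ) < 2 ^ d := by positivity
  rw [show (1/(d:ℝ)^4 * 2^d * (1+δ)^s) = 2^d * (1/(d:ℝ)^4 * (1+δ)^s) by ring]
  apply mul_le_mul_of_nonneg_left _ (le_of_lt h2d)
  -- core: (1+δ/2)^d ≤ 1/d^4 * (1+δ)^s
  have step1 : (1 + δ/2)^d ≤ Real.exp ((d:ℝ) * (δ/2)) := by
    calc (1 + δ/2)^d ≤ (Real.exp (δ/2))^d := by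
          apply pow_le_pow_left₀ (by positivity)
          linarith [Real.add_one_le_exp (δ/2)]
      _ = Real.exp ((d:ℝ) * (δ/2)) := (Real.exp_nat_mul _ d).symm
  have step2 : Real.exp ((s:ℝ) * (δ - δ^2)) ≤ (1+δ)^s := by
    have hbase : Real.exp (δ - δ^2) ≤ 1 + δ := by
      have hy1 : δ - δ^2 < 1 := by nlinarith
      have h1 : 1 - (δ - δ^2) ≤ Real.exp (-(δ - δ^2)) := by
        linarith [Real.add_one_le_exp (-(δ - δ^2))]
      have hpos : 0 < 1 - (δ - δ^2) := by linarith
      have h2 : Real.exp (δ - δ^2) ≤ (1 - (δ - δ^2))⁻¹ := by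
        have h1' : 1 - (δ - δ^2) ≤ (Real.exp (δ - δ^2))⁻¹ := by rw [← Real.exp_neg]; exact h1
        calc Real.exp (δ - δ^2) = ((Real.exp (δ - δ^2))⁻¹)⁻¹ := (inv_inv _).symm
          _ ≤ (1 - (δ - δ^2))⁻¹ := inv_anti₀ hpos h1'
      have h3 : (1 - (δ - δ^2))⁻¹ ≤ 1 + δ := by
        rw [inv_le_iff_one_le_mul₀ hpos]
        nlinarith
      linarith
    calc Real.exp ((s:ℝ) * (δ - δ^2)) = (Real.exp (δ - δ^2))^s := Real.exp_nat_mul _ s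
      _ ≤ (1+δ)^s := pow_le_pow_left₀ (Real.exp_nonneg _) hbase s
  have hd4 : ((d:ℝ)^4) = Real.exp (4 * L) := by
    rw [hLdef, ← Real.exp_log (show (0:ℝ) < (d:ℝ)^4 by positivity), Real.log_pow]
    norm_num
  have key : (d:ℝ) * (δ/2) + 4 * L ≤ (s:ℝ) * (δ - δ^2) := by
    have hδδ : 0 ≤ δ - δ^2 := by nlinarith
    have h1 : ((d:ℝ)/2 + t) * (δ - δ^2) ≤ (s:ℝ) * (δ - δ^2) := by
      apply mul_le_mul_of_nonneg_right _ hδδ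
      calc ((d:ℝ)/2 + t) = tau d := by rw [tau, htdef, hLdef]
        _ ≤ (s:ℝ) := hsge
    refine le_trans ?_ h1
    have hq : 2*(d:ℝ)*δ = t := by rw [hδdef]; field_simp
    have hq2 : 4*(d:ℝ)^2*δ^2 = 16*((d:ℝ)*L) := by rw [← ht2, ← hq]; ring
    have hL4 : (d:ℝ)*δ^2 = 4*L := by
      have h4 : (4*(d:ℝ)) * ((d:ℝ)*δ^2) = (4*(d:ℝ)) * (4*L) := by linarith [hq2]
      exact mul_left_cancel₀ (by positivity) h4
    have hq3 : t*δ = 2*(d:ℝ)*δ^2 := by rw [← hq]; ring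
    have h5 : t*δ^2 ≤ ((d:ℝ)/2)*δ^2 := mul_le_mul_of_nonneg_right ht (sq_nonneg δ)
    nlinarith [hq3, hL4, h5]
  calc (1 + δ/2)^d ≤ Real.exp ((d:ℝ) * (δ/2)) := step1
    _ ≤ 1/(d:ℝ)^4 * Real.exp ((s:ℝ) * (δ - δ^2)) := by
        have heq : 1/(d:ℝ)^4 * Real.exp ((s:ℝ)*(δ-δ^2))
            = Real.exp ((s:ℝ)*(δ-δ^2) - 4*L) := by
          rw [Real.exp_sub, hd4]; ring
        rw [heq]
        exact Real.exp_le_exp.mpr (by linarith [key])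
    _ ≤ 1/(d:ℝ)^4 * (1+δ)^s := by
        apply mul_le_mul_of_nonneg_left step2 (by positivity)

lemma card_univ_bool [Fintype V] :
    ((univ : Finset (V → Bool)).card) = 2 ^ (Fintype.card V) := by
  classical
  rw [Finset.card_univ, Fintype.card_fun, Fintype.card_bool]

lemma crossCnt_le_card [Fintype V] (G : SimpleGraph V) (f : V → Bool) (v : V) :
    crossCnt G f v ≤ (nbF G v).card := Finset.card_filter_le _ _

lemma tau_nonneg (d : ℕ) : 0 ≤ tau d := by
  have : 0 ≤ Real.sqrt ((d:ℝ) * Real.log d) := Real.sqrt_nonneg _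
  have : (0:ℝ) ≤ (d:ℝ)/2 := by positivity
  rw [tau]; positivity

lemma chernoff [Fintype V] (G : SimpleGraph V) (d : ℕ) (hd : 3 ≤ d)
    (hn : d + 1 ≤ Fintype.card V) (v : V) (hcard : (nbF G v).card = d) :
    ((univ.filter (Bad G d v)).card : ℝ)
      ≤ 1 / (d : ℝ) ^ 4 * 2 ^ (Fintype.card V) := by
  classical
  have hd' : (3:ℝ) ≤ (d:ℝ) := by exact_mod_cast hd
  by_cases hbig : (d:ℝ) ≤ tau d
  · -- bad events impossible
    have : (univ.filter (Bad G d v)) = ∅ := by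
      apply Finset.filter_eq_empty_iff.mpr
      intro f _
      rw [Bad, not_lt]
      calc (crossCnt G f v : ℝ) ≤ ((nbF G v).card : ℝ) := by
            exact_mod_cast crossCnt_le_card G f v
        _ = (d:ℝ) := by rw [hcard]
        _ ≤ tau d := hbig
    rw [this]
    simp only [Finset.card_empty, Nat.cast_zero]
    positivity
  · push_neg at hbig
    have ht : 4 * Real.sqrt ((d:ℝ) * Real.log d) ≤ (d:ℝ)/2 := by
      rw [tau] at hbig; linarith
    set s : ℕ := ⌊tau d⌋₊ + 1 with hsdef
    have hsge : tau d ≤ (s:ℝ) := by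
      rw [hsdef]
      push_cast
      exact le_of_lt (Nat.lt_floor_add_one _)
    have hs : ∀ f : V → Bool, Bad G d v f → s ≤ crossCnt G f v := by
      intro f hf
      rw [Bad] at hf
      have := (Nat.floor_lt (tau_nonneg d)).mpr hf
      omega
    set lam : ℝ := 1 + 4 * Real.sqrt ((d:ℝ) * Real.log d) / (2*d) with hlamdef
    have hlam : 1 ≤ lam := by
      rw [hlamdef]
      have : 0 ≤ 4 * Real.sqrt ((d:ℝ) * Real.log d) / (2*d) := by positivity
      linarith
    have hlam0 : 0 < lam := by linarith
    have hsplit : ((univ.filter (Bad G d v)).card : ℝ)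
        = ((univ.filter (fun f : V → Bool => Bad G d v f ∧ f v = true)).card : ℝ)
          + ((univ.filter (fun f : V → Bool => Bad G d v f ∧ f v = false)).card : ℝ) := by
      have h1 := Finset.card_filter_add_card_filter_not
        (s := univ.filter (Bad G d v)) (p := fun f : V → Bool => f v = true)
      rw [Finset.filter_filter, Finset.filter_filter] at h1
      have h2 : (univ.filter (fun f : V → Bool => Bad G d v f ∧ ¬ (f v = true)))
          = (univ.filter (fun f : V → Bool => Bad G d v f ∧ f v = false)) := by
        apply Finset.filter_congr
        intro f _
        simp
      rw [h2] at h1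
      exact_mod_cast h1.symm
    have hc1 := count_side G d v hcard lam hlam s hs true
    have hc2 := count_side G d v hcard lam hlam s hs false
    have hnum := numeric_core d hd s hsge ht
    rw [← hlamdef] at hnum
    have hlams : 0 < lam ^ s := by positivity
    -- combine
    have hcomb : ((univ.filter (Bad G d v)).card : ℝ) * lam ^ s
        ≤ (1 + lam) ^ d * 2 ^ (Fintype.card V - d) := by
      have h2p : ((2:ℝ)) ^ (Fintype.card V - d) = 2 * 2 ^ (Fintype.card V - 1 - d) := by
        rw [← pow_succ']
        congr 1
        omega
      rw [hsplit, add_mul, h2p]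
      linarith [hc1, hc2]
    have hfin : (1 + lam) ^ d * 2 ^ (Fintype.card V - d)
        ≤ (1 / (d : ℝ) ^ 4 * 2 ^ (Fintype.card V)) * lam ^ s := by
      have h2n : ((2:ℝ)) ^ (Fintype.card V) = 2 ^ d * 2 ^ (Fintype.card V - d) := by
        rw [← pow_add]
        congr 1
        omega
      rw [h2n]
      calc (1 + lam) ^ d * 2 ^ (Fintype.card V - d)
          ≤ (1/(d:ℝ)^4 * 2^d * lam ^ s) * 2 ^ (Fintype.card V - d) := by
            apply mul_le_mul_of_nonneg_right hnum (by positivity)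
        _ = 1 / (d:ℝ) ^ 4 * (2 ^ d * 2 ^ (Fintype.card V - d)) * lam ^ s := by ring
      
    have := le_trans hcomb hfin
    exact le_of_mul_le_mul_right (by linarith) hlams

noncomputable def CS [Fintype V] (G : SimpleGraph V) (d : ℕ) (S : Finset V) :
    Finset (V → Bool) :=
  univ.filter (fun f => ∀ u ∈ S, ¬ Bad G d u f)

noncomputable def xx (d : ℕ) : ℝ := 1 / (2 * ((d : ℝ) + 1) ^ 2)

noncomputable def Gam [Fintype V] (G : SimpleGraph V) (v : V) : Finset V :=
  univ.filter (fun u => ((nbc G u) ∩ (nbc G v)).Nonempty)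

lemma mem_nbc_comm [Fintype V] (G : SimpleGraph V) (u w : V) :
    w ∈ nbc G u ↔ u ∈ nbc G w := by
  simp only [nbc, Finset.mem_insert, nbF, Finset.mem_filter, Finset.mem_univ, true_and]
  constructor
  · rintro (h | h)
    · exact Or.inl h.symm
    · exact Or.inr h.symm
  · rintro (h | h)
    · exact Or.inl h.symm
    · exact Or.inr h.symm

lemma card_Gam_le [Fintype V] (G : SimpleGraph V) (d : ℕ)
    (hreg : ∀ w, (nbF G w).card = d) (v : V) :
    (Gam G v).card ≤ (d + 1) ^ 2 := by
  classical
  have hsub : Gam G v ⊆ (nbc G v).biUnion (fun w => nbc G w) := by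
    intro u hu
    rw [Gam, Finset.mem_filter] at hu
    obtain ⟨w, hw⟩ := hu.2
    rw [Finset.mem_inter] at hw
    rw [Finset.mem_biUnion]
    exact ⟨w, hw.2, (mem_nbc_comm G u w).mp hw.1⟩
  calc (Gam G v).card ≤ ((nbc G v).biUnion (fun w => nbc G w)).card :=
        Finset.card_le_card hsub
    _ ≤ ∑ w ∈ nbc G v, (nbc G w).card := Finset.card_biUnion_le
    _ ≤ ∑ _w ∈ nbc G v, (d+1) := by
        apply Finset.sum_le_sum
        intro w _
        calc (nbc G w).card ≤ (nbF G w).card + 1 := Finset.card_insert_le _ _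
          _ = d + 1 := by rw [hreg w]
    _ = (nbc G v).card * (d+1) := by rw [Finset.sum_const, smul_eq_mul]
    _ ≤ (d+1) * (d+1) := by
        apply Nat.mul_le_mul_right
        calc (nbc G v).card ≤ (nbF G v).card + 1 := Finset.card_insert_le _ _
          _ = d + 1 := by rw [hreg v]
    _ = (d+1)^2 := (sq (d+1)).symm

lemma crossCnt_depends [Fintype V] (G : SimpleGraph V) (f g : V → Bool) (v : V)
    (h : ∀ x ∈ nbc G v, f x = g x) : crossCnt G f v = crossCnt G g v := by
  rw [crossCnt, crossCnt]
  congr 1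
  apply Finset.filter_congr
  intro u hu
  have h1 : f u = g u := h u (Finset.mem_insert_of_mem hu)
  have h2 : f v = g v := h v (Finset.mem_insert_self v _)
  rw [h1, h2]

lemma xx_pos (d : ℕ) : 0 < xx d := by rw [xx]; positivity

lemma xx_le (d : ℕ) (hd : 3 ≤ d) : xx d ≤ 1/32 := by
  have hd' : (3:ℝ) ≤ (d:ℝ) := by exact_mod_cast hd
  rw [xx]
  rw [div_le_div_iff₀ (by positivity) (by norm_num)]
  nlinarith

lemma lll_main [Fintype V] (G : SimpleGraph V) (d : ℕ) (hd : 3 ≤ d)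
    (hn : d + 1 ≤ Fintype.card V) (hreg : ∀ w, (nbF G w).card = d) :
    ∀ (N : ℕ) (S : Finset V), S.card = N → ∀ v : V,
      (((CS G d S).filter (Bad G d v)).card : ℝ) ≤ xx d * (CS G d S).card := by
  classical
  have hd' : (3:ℝ) ≤ (d:ℝ) := by exact_mod_cast hd
  have hxx0 : 0 < xx d := xx_pos d
  have hxx32 : xx d ≤ 1/32 := xx_le d hd
  intro N
  induction N using Nat.strong_induction_on with
  | _ N ih =>
  intro S hS v
  by_cases hv : v ∈ S
  · have hemp : (CS G d S).filter (Bad G d v) = ∅ := by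
      apply Finset.filter_eq_empty_iff.mpr
      intro f hf
      rw [CS, Finset.mem_filter] at hf
      exact hf.2 v hv
    rw [hemp]
    simp only [Finset.card_empty, Nat.cast_zero]
    positivity
  · have hS2sub : S \ Gam G v ⊆ S := Finset.sdiff_subset
    set S₂ := S \ Gam G v with hS2def
    -- Step A : monotonicity
    have hmono : (CS G d S) ⊆ (CS G d S₂) := by
      intro f hf
      rw [CS, Finset.mem_filter] at hf ⊢
      exact ⟨hf.1, fun u hu => hf.2 u (hS2sub hu)⟩
    have stepA : (((CS G d S).filter (Bad G d v)).card : ℝ)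
        ≤ (((CS G d S₂).filter (Bad G d v)).card : ℝ) := by
      exact_mod_cast Finset.card_le_card (Finset.filter_subset_filter _ hmono)
    -- Step B : independence
    have hEdep : ∀ f g : V → Bool, (∀ x ∈ nbc G v, f x = g x) →
        Bad G d v f → Bad G d v g := by
      intro f g hfg hb
      rwa [Bad, ← crossCnt_depends G f g v hfg]
    have hFdep : ∀ f g : V → Bool, (∀ x ∉ nbc G v, f x = g x) →
        (∀ u ∈ S₂, ¬ Bad G d u f) → (∀ u ∈ S₂, ¬ Bad G d u g) := by
      intro f g hfg hf u hu
      have hdisj : ∀ x ∈ nbc G u, x ∉ nbc G v := by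
        intro x hx hxv
        have hmem : u ∈ Gam G v := by
          rw [Gam, Finset.mem_filter]
          exact ⟨Finset.mem_univ u, ⟨x, Finset.mem_inter.mpr ⟨hx, hxv⟩⟩⟩
        rw [hS2def, Finset.mem_sdiff] at hu
        exact hu.2 hmem
      have hcc : crossCnt G f u = crossCnt G g u :=
        crossCnt_depends G f g u (fun x hx => hfg x (hdisj x hx))
      rw [Bad, ← hcc]
      exact hf u hu
    have stepB : (((CS G d S₂).filter (Bad G d v)).card) * 2 ^ (Fintype.card V)
        = ((univ.filter (Bad G d v)).card) * (CS G d S₂).card := by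
      have h0 := indep_count (nbc G v) (Bad G d v)
        (fun f => ∀ u ∈ S₂, ¬ Bad G d u f) hEdep hFdep
      rw [card_univ_bool] at h0
      have hset : (CS G d S₂).filter (Bad G d v)
          = univ.filter (fun f => Bad G d v f ∧ (∀ u ∈ S₂, ¬ Bad G d u f)) := by
        ext f
        simp only [CS, Finset.mem_filter, Finset.mem_univ, true_and]
        tauto
      have hset2 : CS G d S₂ = univ.filter (fun f => ∀ u ∈ S₂, ¬ Bad G d u f) := by
        ext f
        simp only [CS, Finset.mem_filter, Finset.mem_univ, true_and]
      rw [hset, hset2]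
      convert h0 using 3 <;> (ext f; simp only [Finset.mem_filter]; try tauto)
    -- Step D : peeling
    have stepD : ∀ T : Finset V, T ⊆ S ∩ Gam G v →
        (1 - xx d) ^ T.card * ((CS G d S₂).card : ℝ) ≤ ((CS G d (S₂ ∪ T)).card : ℝ) := by
      intro T
      induction T using Finset.induction_on with
      | empty => intro _; simp
      | @insert u T hu ihT =>
        intro hsub
        have hu_mem : u ∈ S ∩ Gam G v := hsub (Finset.mem_insert_self u T)
        have hTsub : T ⊆ S ∩ Gam G v := fun x hx => hsub (Finset.mem_insert_of_mem hx)
        have ih2 := ihT hTsub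
        have hunion : S₂ ∪ insert u T = insert u (S₂ ∪ T) := by
          rw [Finset.union_insert]
        have hfilt : CS G d (insert u (S₂ ∪ T))
            = (CS G d (S₂ ∪ T)).filter (fun f => ¬ Bad G d u f) := by
          rw [CS, CS, Finset.filter_filter]
          apply Finset.filter_congr
          intro f _
          constructor
          · intro h
            exact ⟨fun w hw => h w (Finset.mem_insert_of_mem hw),
                   h u (Finset.mem_insert_self u _)⟩
          · rintro ⟨h1, h2⟩ w hw
            rcases Finset.mem_insert.mp hw with rfl | hw'
            · exact h2
            · exact h1 w hw'
        have hcard_lt : (S₂ ∪ T).card < N := by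
          have hsubS : S₂ ∪ T ⊆ S.erase u := by
            intro x hx
            rw [Finset.mem_erase]
            rcases Finset.mem_union.mp hx with h | h
            · refine ⟨?_, hS2sub h⟩
              rintro rfl
              rw [hS2def, Finset.mem_sdiff] at h
              exact h.2 (Finset.mem_inter.mp hu_mem).2
            · refine ⟨?_, (Finset.mem_inter.mp (hTsub h)).1⟩
              rintro rfl
              exact hu h
          calc (S₂ ∪ T).card ≤ (S.erase u).card := Finset.card_le_card hsubS
            _ < S.card := Finset.card_erase_lt_of_mem (Finset.mem_inter.mp hu_mem).1
            _ = N := hS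
        have hmain := ih _ hcard_lt (S₂ ∪ T) rfl u
        have hfc := Finset.card_filter_add_card_filter_not
          (s := CS G d (S₂ ∪ T)) (p := Bad G d u)
        have hge : (1 - xx d) * ((CS G d (S₂ ∪ T)).card : ℝ)
            ≤ (((CS G d (S₂ ∪ T)).filter (fun f => ¬ Bad G d u f)).card : ℝ) := by
          have hcast : (((CS G d (S₂ ∪ T)).filter (Bad G d u)).card : ℝ)
              + (((CS G d (S₂ ∪ T)).filter (fun f => ¬ Bad G d u f)).card : ℝ)
              = ((CS G d (S₂ ∪ T)).card : ℝ) := by exact_mod_cast hfc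
          nlinarith [hmain]
        calc (1 - xx d) ^ (insert u T).card * ((CS G d S₂).card : ℝ)
            = (1 - xx d) * ((1 - xx d) ^ T.card * ((CS G d S₂).card : ℝ)) := by
              rw [Finset.card_insert_of_notMem hu]; ring
          _ ≤ (1 - xx d) * ((CS G d (S₂ ∪ T)).card : ℝ) :=
              mul_le_mul_of_nonneg_left ih2 (by linarith)
          _ ≤ (((CS G d (S₂ ∪ T)).filter (fun f => ¬ Bad G d u f)).card : ℝ) := hge
          _ = ((CS G d (S₂ ∪ insert u T)).card : ℝ) := by rw [hunion, hfilt]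
    -- assemble
    have hST : S₂ ∪ (S ∩ Gam G v) = S := by
      rw [hS2def, Finset.sdiff_union_inter]
    have hpeel := stepD (S ∩ Gam G v) (Finset.Subset.refl _)
    rw [hST] at hpeel
    have hk : (S ∩ Gam G v).card ≤ (d+1)^2 :=
      le_trans (Finset.card_le_card Finset.inter_subset_right) (card_Gam_le G d hreg v)
    have hxxval : ((d:ℝ)+1)^2 * xx d = 1/2 := by
      rw [xx]; field_simp
    have hpow : (1/2 : ℝ) ≤ (1 - xx d) ^ (S ∩ Gam G v).card := by
      have hb := one_add_mul_le_pow (a := -(xx d)) (by linarith) ((S ∩ Gam G v).card)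
      have hk' : ((S ∩ Gam G v).card : ℝ) * xx d ≤ ((d:ℝ)+1)^2 * xx d := by
        apply mul_le_mul_of_nonneg_right _ (le_of_lt hxx0)
        have : (((d+1)^2 : ℕ) : ℝ) = ((d:ℝ)+1)^2 := by push_cast; ring
        rw [← this]
        exact_mod_cast hk
      have h1 : 1 + ((S ∩ Gam G v).card : ℝ) * (-(xx d)) ≤ (1 + (-(xx d))) ^ (S ∩ Gam G v).card := hb
      have h2 : (1:ℝ) + (-(xx d)) = 1 - xx d := by ring
      rw [h2] at h1
      nlinarith [h1, hk', hxxval]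
    have hcher := chernoff G d hd hn v (hreg v)
    have h2n : (0:ℝ) < 2 ^ (Fintype.card V) := by positivity
    have hb : (((CS G d S₂).filter (Bad G d v)).card : ℝ)
        ≤ 1/(d:ℝ)^4 * ((CS G d S₂).card : ℝ) := by
      have hBcast : (((CS G d S₂).filter (Bad G d v)).card : ℝ) * 2 ^ (Fintype.card V)
          = ((univ.filter (Bad G d v)).card : ℝ) * ((CS G d S₂).card : ℝ) := by
        exact_mod_cast stepB
      have hstep : ((univ.filter (Bad G d v)).card : ℝ) * ((CS G d S₂).card : ℝ)
          ≤ (1/(d:ℝ)^4 * 2 ^ (Fintype.card V)) * ((CS G d S₂).card : ℝ) :=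
        mul_le_mul_of_nonneg_right hcher (Nat.cast_nonneg _)
      rw [← hBcast] at hstep
      have hre : (1/(d:ℝ)^4 * 2 ^ (Fintype.card V)) * ((CS G d S₂).card : ℝ)
          = (1/(d:ℝ)^4 * ((CS G d S₂).card : ℝ)) * 2 ^ (Fintype.card V) := by ring
      rw [hre] at hstep
      exact le_of_mul_le_mul_right hstep h2n
    have hpxx : 1/(d:ℝ)^4 ≤ xx d / 2 := by
      have h4 : xx d / 2 = 1 / (4*((d:ℝ)+1)^2) := by
        have hne : ((d:ℝ)+1) ≠ 0 := by positivity
        rw [xx]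
        field_simp
        ring
      rw [h4, div_le_div_iff₀ (by positivity) (by positivity)]
      nlinarith [sq_nonneg ((d:ℝ) - 3), sq_nonneg ((d:ℝ)^2 - 3*(d:ℝ)), hd']
    calc (((CS G d S).filter (Bad G d v)).card : ℝ)
        ≤ (((CS G d S₂).filter (Bad G d v)).card : ℝ) := stepA
      _ ≤ 1/(d:ℝ)^4 * ((CS G d S₂).card : ℝ) := hb
      _ ≤ (xx d / 2) * ((CS G d S₂).card : ℝ) :=
          mul_le_mul_of_nonneg_right hpxx (Nat.cast_nonneg _)
      _ = xx d * ((1/2) * ((CS G d S₂).card : ℝ)) := by ring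
      _ ≤ xx d * ((1 - xx d) ^ (S ∩ Gam G v).card * ((CS G d S₂).card : ℝ)) := by
          apply mul_le_mul_of_nonneg_left _ (le_of_lt hxx0)
          exact mul_le_mul_of_nonneg_right hpow (Nat.cast_nonneg _)
      _ ≤ xx d * ((CS G d S).card : ℝ) :=
          mul_le_mul_of_nonneg_left hpeel (le_of_lt hxx0)

lemma CS_insert [Fintype V] (G : SimpleGraph V) (d : ℕ) (u : V) (S : Finset V) :
    CS G d (insert u S) = (CS G d S).filter (fun f => ¬ Bad G d u f) := by
  classical
  ext f
  simp only [CS, Finset.mem_filter, Finset.mem_univ, true_and, Finset.mem_insert]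
  constructor
  · intro h
    exact ⟨fun w hw => h w (Or.inr hw), h u (Or.inl rfl)⟩
  · rintro ⟨h1, h2⟩ w hw
    rcases hw with rfl | hw'
    · exact h2
    · exact h1 w hw'

lemma lll_lower [Fintype V] (G : SimpleGraph V) (d : ℕ) (hd : 3 ≤ d)
    (hn : d + 1 ≤ Fintype.card V) (hreg : ∀ w, (nbF G w).card = d) :
    ∀ S : Finset V,
      ((1 - xx d) ^ S.card * 2 ^ (Fintype.card V) : ℝ) ≤ ((CS G d S).card : ℝ) := by
  classical
  have hxx0 := xx_pos d
  have hxx32 := xx_le d hd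
  intro S
  induction S using Finset.induction_on with
  | empty =>
    have he : CS G d ∅ = univ := by
      ext f; simp [CS]
    rw [he]
    have := card_univ_bool (V := V)
    rw [this]
    simp
  | @insert u S hu ihS =>
    have hmain := lll_main G d hd hn hreg S.card S rfl u
    have hfc := Finset.card_filter_add_card_filter_not
      (s := CS G d S) (p := Bad G d u)
    have hcast : (((CS G d S).filter (Bad G d u)).card : ℝ)
        + (((CS G d S).filter (fun f => ¬ Bad G d u f)).card : ℝ)
        = ((CS G d S).card : ℝ) := by exact_mod_cast hfc
    have hge : (1 - xx d) * ((CS G d S).card : ℝ)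
        ≤ (((CS G d S).filter (fun f => ¬ Bad G d u f)).card : ℝ) := by
      nlinarith [hmain]
    calc (1 - xx d) ^ (insert u S).card * (2:ℝ) ^ (Fintype.card V)
        = (1 - xx d) * ((1 - xx d) ^ S.card * 2 ^ (Fintype.card V)) := by
          rw [Finset.card_insert_of_notMem hu]; ring
      _ ≤ (1 - xx d) * ((CS G d S).card : ℝ) :=
          mul_le_mul_of_nonneg_left ihS (by linarith)
      _ ≤ (((CS G d S).filter (fun f => ¬ Bad G d u f)).card : ℝ) := hge
      _ = ((CS G d (insert u S)).card : ℝ) := by rw [CS_insert]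

lemma exists_good [Fintype V] (G : SimpleGraph V) (d : ℕ) (hd : 3 ≤ d)
    (hn : d + 1 ≤ Fintype.card V) (hreg : ∀ w, (nbF G w).card = d)
    (hn4 : 4 ≤ Fintype.card V) :
    ∃ f : V → Bool, (∀ v, ¬ Bad G d v f) ∧ ∃ a b : V, f a ≠ f b := by
  classical
  have hxx0 := xx_pos d
  have hxx32 := xx_le d hd
  have hlow := lll_lower G d hd hn hreg Finset.univ
  have hcard3 : 3 ≤ (CS G d Finset.univ).card := by
    have h1 : ((31/16:ℝ)) ^ (Fintype.card V)
        ≤ ((1 - xx d) * 2) ^ (Fintype.card V) := by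
      apply pow_le_pow_left₀ (by norm_num)
      linarith
    have h2 : ((1 - xx d) * 2) ^ (Fintype.card V)
        = (1 - xx d) ^ (Fintype.card V) * 2 ^ (Fintype.card V) := mul_pow _ _ _
    have h3 : (2:ℝ) < (31/16) ^ 4 := by norm_num
    have h4 : ((31/16:ℝ)) ^ 4 ≤ (31/16) ^ (Fintype.card V) :=
      pow_le_pow_right₀ (by norm_num) hn4
    have hc : (2:ℝ) < ((CS G d Finset.univ).card : ℝ) := by
      calc (2:ℝ) < (31/16) ^ 4 := h3
        _ ≤ (31/16) ^ (Fintype.card V) := h4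
        _ ≤ ((1 - xx d) * 2) ^ (Fintype.card V) := h1
        _ = (1 - xx d) ^ (Fintype.card V) * 2 ^ (Fintype.card V) := h2
        _ = (1 - xx d) ^ (Finset.univ : Finset V).card * 2 ^ (Fintype.card V) := by
            rw [Finset.card_univ]
        _ ≤ ((CS G d Finset.univ).card : ℝ) := hlow
    exact_mod_cast hc
  have hne : Nonempty V := by
    have : 0 < Fintype.card V := by omega
    exact Fintype.card_pos_iff.mp this
  obtain ⟨x₀⟩ := hne
  by_contra hcon
  push_neg at hcon
  have hinj : ∀ f ∈ CS G d Finset.univ, ∀ g ∈ CS G d Finset.univ,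
      f x₀ = g x₀ → f = g := by
    intro f hf g hg hfg
    rw [CS, Finset.mem_filter] at hf hg
    have hfconst : ∀ a b : V, f a = f b := hcon f (fun v => hf.2 v (Finset.mem_univ v))
    have hgconst : ∀ a b : V, g a = g b := hcon g (fun v => hg.2 v (Finset.mem_univ v))
    funext a
    calc f a = f x₀ := hfconst a x₀
      _ = g x₀ := hfg
      _ = g a := hgconst x₀ a
  have hle : (CS G d Finset.univ).card ≤ (Finset.univ : Finset Bool).card :=
    Finset.card_le_card_of_injOn (fun f => f x₀) (fun f _ => Finset.mem_univ _)
      (fun f hf g hg h => hinj f (Finset.mem_coe.mp hf) g (Finset.mem_coe.mp hg) h)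
  simp only [Finset.card_univ, Fintype.card_bool] at hle
  omega

lemma degN_eq_nbF [Fintype V] (H : SimpleGraph V) (v : V) :
    degN H v = (nbF H v).card := by
  classical
  rw [degN]
  have h : H.neighborSet v = ↑(nbF H v) := by
    ext u
    simp [nbF, SimpleGraph.mem_neighborSet]
  rw [h, Set.ncard_coe_finset]

end Stmt2Aux

/-- every d-regular graph (3 ≤ d ≤ n-1) has a subgraph H with
Δ(H) ≤ d/2 + 4√(d ln d) whose removal disconnects the graph. -/
theorem stmt2 {V : Type*} [Fintype V] (G : SimpleGraph V) (d : ℕ)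
    (hd3 : 3 ≤ d) (hdn : d ≤ Fintype.card V - 1) (hreg : IsReg G d) :
    ∃ H ≤ G, (maxDeg H : ℝ) ≤ (d : ℝ) / 2 + 4 * Real.sqrt (d * Real.log d) ∧
      ¬ (G \ H).Connected := by
  classical
  have hn : d + 1 ≤ Fintype.card V := by
    have h0 : Fintype.card V = 0 ∨ 1 ≤ Fintype.card V := by omega
    omega
  have hn4 : 4 ≤ Fintype.card V := by omega
  have hnv : Nonempty V := Fintype.card_pos_iff.mp (by omega)
  have hreg' : ∀ w, (Stmt2Aux.nbF G w).card = d := by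
    intro w
    rw [← Stmt2Aux.degN_eq_nbF]
    exact hreg w
  obtain ⟨f, hgood, a, b, hab⟩ := Stmt2Aux.exists_good G d hd3 hn hreg' hn4
  set S : Set V := {v | f v = true} with hSdef
  refine ⟨bipartiteBetween G S, ?_, ?_, ?_⟩
  · intro u w huw
    exact huw.1
  · -- degree bound
    have hdeg : ∀ w, degN (bipartiteBetween G S) w = Stmt2Aux.crossCnt G f w := by
      intro w
      rw [Stmt2Aux.degN_eq_nbF, Stmt2Aux.crossCnt]
      congr 1
      ext u
      simp only [Stmt2Aux.nbF, Finset.mem_filter, Finset.mem_univ, true_and]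
      simp only [bipartiteBetween]
      constructor
      · rintro ⟨hadj, hside⟩
        refine ⟨hadj, fun hc => ?_⟩
        rcases hside with ⟨h1, h2⟩ | ⟨h1, h2⟩
        · exact h2 (show f u = true from hc.trans h1)
        · exact h1 (show f w = true from hc.symm.trans h2)
      · rintro ⟨hadj, hne⟩
        refine ⟨hadj, ?_⟩
        cases hfw : f w
        · right
          refine ⟨?_, ?_⟩
          · show ¬ (f w = true)
            simp [hfw]
          · show f u = true
            cases hfu : f u
            · exact absurd (hfu.trans hfw.symm) hne
            · rfl
        · left
          refine ⟨hfw, ?_⟩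
          show ¬ (f u = true)
          cases hfu : f u
          · simp
          · exact absurd (hfu.trans hfw.symm) hne
    have hcross : ∀ w, (Stmt2Aux.crossCnt G f w : ℝ) ≤ Stmt2Aux.tau d := by
      intro w
      have := hgood w
      rw [Stmt2Aux.Bad] at this
      exact le_of_not_gt this
    have hsup : maxDeg (bipartiteBetween G S) ≤ ⌊Stmt2Aux.tau d⌋₊ := by
      rw [maxDeg]
      apply csSup_le (Set.range_nonempty _)
      rintro k ⟨w, rfl⟩
      rw [hdeg w]
      exact Nat.le_floor (hcross w)
    calc (maxDeg (bipartiteBetween G S) : ℝ) ≤ (⌊Stmt2Aux.tau d⌋₊ : ℝ) := by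
          exact_mod_cast hsup
      _ ≤ Stmt2Aux.tau d := Nat.floor_le (Stmt2Aux.tau_nonneg d)
      _ = (d : ℝ) / 2 + 4 * Real.sqrt (d * Real.log d) := rfl
  · -- disconnected
    intro hconn
    have hpres : ∀ u w, (G \ bipartiteBetween G S).Adj u w → f u = f w := by
      intro u w huw
      rw [SimpleGraph.sdiff_adj] at huw
      by_contra hne'
      apply huw.2
      refine ⟨huw.1, ?_⟩
      cases hfu : f u <;> cases hfw : f w
      · exact absurd (hfu.trans hfw.symm) hne'
      · right
        refine ⟨?_, ?_⟩
        · show ¬ (f u = true)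
          simp [hfu]
        · exact hfw
      · left
        refine ⟨hfu, ?_⟩
        show ¬ (f w = true)
        simp [hfw]
      · exact absurd (hfu.trans hfw.symm) hne'
    have hwalk : ∀ u w, (G \ bipartiteBetween G S).Reachable u w → f u = f w := by
      intro u w hr
      obtain ⟨p⟩ := hr
      induction p with
      | nil => rfl
      | cons h p ih => exact (hpres _ _ h).trans ih
    exact hab (hwalk a b (hconn.preconnected a b))
end

section
/- Let G be an (n,d,λ)-graph with 3 ≤ d ≤ n−1 and λ ≤ d·(n−4)/(3n−4). Then for every subgraph H ⊆ G with Δ(H) ≤ (d−λ)/2 · (1 − 4/n), the graph G − H is (d − Δ(H))-edge-connected. -/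
open SimpleGraph Real
open scoped Classical

variable {V : Type*}

section MyAux

open Finset

variable {V : Type*}

/-- Number of ordered adjacent pairs from `U` to its complement. -/
noncomputable def cutC [Fintype V] (G : SimpleGraph V) (U : Finset V) : ℕ :=
  ∑ u ∈ U, ∑ v ∈ Finset.univ \ U, if G.Adj u v then 1 else 0

lemma cutC_symm [Fintype V] (G : SimpleGraph V) (U : Finset V) :
    cutC G (Finset.univ \ U) = cutC G U := by
  unfold cutC
  rw [Finset.sdiff_sdiff_self_left, Finset.univ_inter, Finset.sum_comm]
  refine Finset.sum_congr rfl fun u _ => Finset.sum_congr rfl fun v _ => ?_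
  simp [G.adj_comm]

lemma degN_eq_filter [Fintype V] (H : SimpleGraph V) (v : V) :
    degN H v = (Finset.univ.filter (H.Adj v)).card := by
  classical
  rw [degN, Set.ncard_eq_toFinset_card']
  congr 1
  ext w
  simp [SimpleGraph.neighborSet]
  exact Set.mem_toFinset

lemma degN_le_maxDeg [Fintype V] (H : SimpleGraph V) (v : V) :
    degN H v ≤ maxDeg H := by
  apply le_csSup
  · refine ⟨Fintype.card V, ?_⟩
    rintro x ⟨w, rfl⟩
    rw [degN_eq_filter]
    exact (Finset.card_filter_le _ _).trans (by simp)
  · exact ⟨v, rfl⟩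

lemma degN_sum [Fintype V] (H : SimpleGraph V) (u : V) :
    ∑ v ∈ Finset.univ, (if H.Adj u v then 1 else 0) = degN H u := by
  classical
  rw [← Finset.card_filter, ← degN_eq_filter]

lemma reg_sum_real [Fintype V] {G : SimpleGraph V} {d : ℕ} (h : IsReg G d) (u : V) :
    ∑ v ∈ Finset.univ, (if G.Adj u v then (1:ℝ) else 0) = d := by
  classical
  have h1 : ∑ v ∈ Finset.univ, (if G.Adj u v then (1:ℕ) else 0) = d := by
    rw [degN_sum]; exact h u
  calc ∑ v ∈ Finset.univ, (if G.Adj u v then (1:ℝ) else 0)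
      = ((∑ v ∈ Finset.univ, if G.Adj u v then (1:ℕ) else 0 : ℕ) : ℝ) := by
        push_cast; refine Finset.sum_congr rfl fun v _ => ?_; split <;> simp
    _ = d := by rw [h1]

/-- Expander mixing lower bound for the cut. -/
lemma mixing [Fintype V] {G : SimpleGraph V} {d : ℕ} {lam : ℝ}
    (hndl : IsNDL G d lam) (U : Finset V) :
    ((d:ℝ) - lam) * U.card * ((Fintype.card V : ℝ) - U.card) ≤
      (Fintype.card V : ℝ) * (cutC G U) := by
  classical
  obtain ⟨hreg, hquad⟩ := hndl
  set n : ℕ := Fintype.card V with hn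
  set W : Finset V := Finset.univ \ U with hW
  set a : ℕ := U.card with ha
  set b : ℕ := W.card with hb
  have haun : a ≤ n := by
    have := Finset.card_le_card (Finset.subset_univ U)
    simpa [ha, hn] using this
  have hab : a + b = n := by
    have h1 : b = n - a := by
      rw [hb, hW, Finset.card_sdiff_of_subset (Finset.subset_univ U), Finset.card_univ]
    omega
  rcases Nat.eq_zero_or_pos n with hn0 | hnpos
  · have ha0 : a = 0 := by omega
    simp [ha0, hn0]
  set x : V → ℝ := fun v => if v ∈ U then (b:ℝ) else -(a:ℝ) with hx
  have hsplit : ∀ f : V → ℝ, ∑ v ∈ Finset.univ, f v = ∑ v ∈ W, f v + ∑ v ∈ U, f v :=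
    fun f => (Finset.sum_sdiff (Finset.subset_univ U)).symm
  have hxU : ∀ v ∈ U, x v = (b:ℝ) := fun v hv => by simp [hx, hv]
  have hxW : ∀ v ∈ W, x v = -(a:ℝ) := fun v hv => by
    have : v ∉ U := (Finset.mem_sdiff.mp hv).2
    simp [hx, this]
  have habr : (a:ℝ) + b = n := by exact_mod_cast hab
  have hsum : ∑ v, x v = 0 := by
    rw [hsplit _, Finset.sum_congr rfl hxW, Finset.sum_congr rfl hxU]
    simp only [Finset.sum_const, nsmul_eq_mul, ← ha, ← hb]
    ring
  have hsq : ∑ v, (x v)^2 = (a:ℝ) * b * n := by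
    have h1 : ∑ v ∈ W, (x v)^2 = (b:ℝ) * (a:ℝ)^2 := by
      rw [Finset.sum_congr rfl (fun v hv => show (x v)^2 = (a:ℝ)^2 by rw [hxW v hv]; ring)]
      simp [← hb]
    have h2 : ∑ v ∈ U, (x v)^2 = (a:ℝ) * (b:ℝ)^2 := by
      rw [Finset.sum_congr rfl (fun v hv => show (x v)^2 = (b:ℝ)^2 by rw [hxU v hv])]
      simp [← ha]
    rw [hsplit _, h1, h2, ← habr]
    ring
  -- inner counts
  set N : ℕ := cutC G U with hN
  have hNsum : (N:ℝ) = ∑ u ∈ U, ∑ v ∈ W, (if G.Adj u v then (1:ℝ) else 0) := by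
    rw [hN, cutC, ← hW]
    push_cast
    refine Finset.sum_congr rfl fun u _ => Finset.sum_congr rfl fun v _ => ?_
    split <;> simp
  have hEW : ∑ u ∈ W, ∑ v ∈ U, (if G.Adj u v then (1:ℝ) else 0) = (N:ℝ) := by
    rw [hNsum, Finset.sum_comm]
    refine Finset.sum_congr rfl fun u _ => Finset.sum_congr rfl fun v _ => ?_
    simp [G.adj_comm]
  have hEU : ∑ u ∈ U, ∑ v ∈ U, (if G.Adj u v then (1:ℝ) else 0) = (d:ℝ) * a - N := by
    have h1 : ∑ u ∈ U, ((∑ v ∈ W, (if G.Adj u v then (1:ℝ) else 0))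
        + ∑ v ∈ U, (if G.Adj u v then (1:ℝ) else 0)) = (d:ℝ) * a := by
      rw [Finset.sum_congr rfl (fun u _ => show
          ((∑ v ∈ W, (if G.Adj u v then (1:ℝ) else 0))
            + ∑ v ∈ U, (if G.Adj u v then (1:ℝ) else 0)) = (d:ℝ) by
        rw [← hsplit _]; exact reg_sum_real hreg u)]
      simp [← ha, mul_comm]
    rw [Finset.sum_add_distrib, ← hNsum] at h1
    linarith
  have hrow : ∀ u, (∑ v, if G.Adj u v then x u * x v else 0)
      = x u * ((n:ℝ) * (∑ v ∈ U, (if G.Adj u v then (1:ℝ) else 0)) - (a:ℝ) * d) := by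
    intro u
    have hcu : (∑ v ∈ W, if G.Adj u v then (1:ℝ) else 0)
        = (d:ℝ) - (∑ v ∈ U, if G.Adj u v then (1:ℝ) else 0) := by
      have h1 := reg_sum_real hreg u
      rw [hsplit _] at h1
      linarith
    have h1 : (∑ v, if G.Adj u v then x u * x v else 0)
        = x u * ∑ v, (if G.Adj u v then x v else 0) := by
      rw [Finset.mul_sum]
      refine Finset.sum_congr rfl fun v _ => ?_
      split <;> simp
    have hWx : ∑ v ∈ W, (if G.Adj u v then x v else 0)
        = -(a:ℝ) * ∑ v ∈ W, (if G.Adj u v then (1:ℝ) else 0) := by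
      rw [Finset.mul_sum]
      refine Finset.sum_congr rfl fun v hv => ?_
      rw [hxW v hv]
      split <;> ring
    have hUx : ∑ v ∈ U, (if G.Adj u v then x v else 0)
        = (b:ℝ) * ∑ v ∈ U, (if G.Adj u v then (1:ℝ) else 0) := by
      rw [Finset.mul_sum]
      refine Finset.sum_congr rfl fun v hv => ?_
      rw [hxU v hv]
      split <;> ring
    rw [h1, hsplit _, hWx, hUx, hcu, ← habr]
    ring
  have hquadval : quadForm G x = (n:ℝ) * ((d:ℝ) * a * b - n * N) := by
    rw [quadForm, Finset.sum_congr rfl (fun u _ => hrow u)]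
    have h2 : ∑ u, x u * ((n:ℝ) * (∑ v ∈ U, (if G.Adj u v then (1:ℝ) else 0)) - (a:ℝ) * d)
        = (n:ℝ) * (∑ u, x u * (∑ v ∈ U, (if G.Adj u v then (1:ℝ) else 0)))
          - (a:ℝ) * d * ∑ u, x u := by
      rw [Finset.mul_sum, Finset.mul_sum, ← Finset.sum_sub_distrib]
      refine Finset.sum_congr rfl fun u _ => by ring
    rw [h2, hsum, mul_zero, sub_zero]
    have h3 : ∑ u, x u * (∑ v ∈ U, (if G.Adj u v then (1:ℝ) else 0))
        = (d:ℝ) * a * b - n * N := by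
      rw [hsplit _,
          Finset.sum_congr rfl (fun u hu => show
            x u * (∑ v ∈ U, (if G.Adj u v then (1:ℝ) else 0))
              = -(a:ℝ) * (∑ v ∈ U, (if G.Adj u v then (1:ℝ) else 0)) by rw [hxW u hu]),
          Finset.sum_congr rfl (fun u hu => show
            x u * (∑ v ∈ U, (if G.Adj u v then (1:ℝ) else 0))
              = (b:ℝ) * (∑ v ∈ U, (if G.Adj u v then (1:ℝ) else 0)) by rw [hxU u hu]),
          ← Finset.mul_sum, ← Finset.mul_sum, hEW, hEU, ← habr]
      ring
    rw [h3]
  have hb1 := hquad x hsum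
  rw [hquadval, hsq] at hb1
  have hb2 := (abs_le.mp hb1).2
  have hnr : (0:ℝ) < n := by exact_mod_cast hnpos
  have hgoal : ((d:ℝ) - lam) * a * b ≤ (n:ℝ) * N := by nlinarith
  have hba : (n:ℝ) - a = b := by linarith
  rw [hba]
  exact hgoal

lemma hpt_ineq [Fintype V] (G H : SimpleGraph V) (u v : V) :
    (if G.Adj u v then 1 else 0) ≤
      (if (G \ H).Adj u v then 1 else 0) + (if H.Adj u v then 1 else 0) := by
  by_cases hG : G.Adj u v
  · by_cases hH : H.Adj u v
    · simp [hG, hH]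
    · have hGH : (G \ H).Adj u v := by rw [SimpleGraph.sdiff_adj]; exact ⟨hG, hH⟩
      simp [hG, hGH]
  · simp [hG]

lemma cutC_ge_main [Fintype V] {G H : SimpleGraph V} {d : ℕ} {lam : ℝ}
    (hndl : IsNDL G d lam) (hd3 : 3 ≤ d) (hn4 : 4 ≤ Fintype.card V)
    (hlam : lam ≤ (d : ℝ) * ((Fintype.card V : ℝ) - 4) / (3 * (Fintype.card V : ℝ) - 4))
    (hdel : (maxDeg H : ℝ) ≤ ((d : ℝ) - lam) / 2 * (1 - 4 / (Fintype.card V : ℝ)))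
    (U : Finset V) (hU1 : U.Nonempty) (hU2 : 2 * U.card ≤ Fintype.card V) :
    d ≤ cutC (G \ H) U + maxDeg H := by
  obtain ⟨hreg, hq⟩ := hndl
  rcases Nat.lt_or_ge U.card 2 with hcase | hcase
  · -- singleton case
    have hU1' : U.card = 1 := by
      have := Finset.card_pos.mpr hU1; omega
    obtain ⟨w, hw⟩ := Finset.card_eq_one.mp hU1'
    rw [hw]
    have hd1 : d = ∑ v ∈ Finset.univ, (if G.Adj w v then 1 else 0) := by
      rw [degN_sum]; exact (hreg w).symm
    have e1 : cutC (G \ H) {w}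
        = ∑ v ∈ Finset.univ \ {w}, (if (G \ H).Adj w v then 1 else 0) := by
      unfold cutC
      rw [Finset.sum_singleton]
      congr!
    have e2 : ∑ v ∈ Finset.univ \ {w}, (if (G \ H).Adj w v then 1 else 0)
        = ∑ v ∈ Finset.univ, (if (G \ H).Adj w v then 1 else 0) := by
      refine Finset.sum_subset Finset.sdiff_subset fun x _ hx => ?_
      have hxw : x = w := by simpa using hx
      simp [hxw]
    calc d = ∑ v ∈ Finset.univ, (if G.Adj w v then 1 else 0) := hd1
      _ ≤ (∑ v ∈ Finset.univ, (if (G \ H).Adj w v then 1 else 0))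
            + ∑ v ∈ Finset.univ, (if H.Adj w v then 1 else 0) := by
          rw [← Finset.sum_add_distrib]
          exact Finset.sum_le_sum fun v _ => hpt_ineq G H w v
      _ ≤ cutC (G \ H) {w} + maxDeg H := by
          rw [e1, e2]
          exact Nat.add_le_add_left (by rw [degN_sum]; exact degN_le_maxDeg H w) _
  · -- main case, 2 ≤ |U|
    set n : ℕ := Fintype.card V with hn
    set a : ℕ := U.card with ha
    have F1 : cutC G U ≤ cutC (G \ H) U + cutC H U := by
      unfold cutC
      calc ∑ u ∈ U, ∑ v ∈ Finset.univ \ U, (if G.Adj u v then 1 else 0)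
          ≤ ∑ u ∈ U, ∑ v ∈ Finset.univ \ U,
              ((if (G \ H).Adj u v then 1 else 0) + (if H.Adj u v then 1 else 0)) :=
            Finset.sum_le_sum fun u _ => Finset.sum_le_sum fun v _ => hpt_ineq G H u v
        _ = _ := by simp [Finset.sum_add_distrib]
    have F2 : cutC H U ≤ maxDeg H * a := by
      unfold cutC
      calc ∑ u ∈ U, ∑ v ∈ Finset.univ \ U, (if H.Adj u v then 1 else 0)
          ≤ ∑ _u ∈ U, maxDeg H := by
            refine Finset.sum_le_sum fun u _ => ?_
            calc ∑ v ∈ Finset.univ \ U, (if H.Adj u v then 1 else 0)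
                ≤ ∑ v ∈ Finset.univ, (if H.Adj u v then 1 else 0) :=
                  Finset.sum_le_sum_of_subset Finset.sdiff_subset
              _ ≤ maxDeg H := by rw [degN_sum]; exact degN_le_maxDeg H u
        _ = maxDeg H * a := by rw [Finset.sum_const, smul_eq_mul, mul_comm]
    have F3 := mixing ⟨hreg, hq⟩ U
    -- real arithmetic
    set Δr : ℝ := (maxDeg H : ℝ) with hΔr
    have hnr : (4:ℝ) ≤ (n:ℝ) := by exact_mod_cast hn4
    have hn0 : (0:ℝ) < n := by linarith
    have har : (2:ℝ) ≤ (a:ℝ) := by exact_mod_cast hcase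
    have h2a : 2 * (a:ℝ) ≤ (n:ℝ) := by exact_mod_cast hU2
    have hdr : (3:ℝ) ≤ (d:ℝ) := by exact_mod_cast hd3
    have h3n4 : (0:ℝ) < 3 * (n:ℝ) - 4 := by linarith
    have hlam' : lam * (3 * (n:ℝ) - 4) ≤ (d:ℝ) * ((n:ℝ) - 4) := by
      rw [le_div_iff₀ h3n4] at hlam
      exact hlam
    have hdl : (0:ℝ) ≤ (d:ℝ) - lam := by nlinarith
    have hfrac : (1 - 4 / (n:ℝ)) = ((n:ℝ) - 4) / n := by field_simp
    have hdel2 : Δr ≤ ((d:ℝ) - lam) * ((n:ℝ) - 4) / (2 * n) := by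
      rw [hΔr]
      calc (maxDeg H : ℝ) ≤ ((d : ℝ) - lam) / 2 * (1 - 4 / (n:ℝ)) := hdel
        _ = ((d:ℝ) - lam) * ((n:ℝ) - 4) / (2 * n) := by
            rw [hfrac]; field_simp; try ring
    have hdel' : Δr * (2 * (n:ℝ)) ≤ ((d:ℝ) - lam) * ((n:ℝ) - 4) :=
      (le_div_iff₀ (by linarith)).mp hdel2
    have F1r : (cutC G U : ℝ) ≤ (cutC (G \ H) U : ℝ) + (cutC H U : ℝ) := by
      exact_mod_cast F1
    have F2r : (cutC H U : ℝ) ≤ Δr * a := by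
      rw [hΔr]; exact_mod_cast F2
    set N : ℝ := (cutC (G \ H) U : ℝ) with hNdef
    have key : (0:ℝ) ≤ ((n:ℝ) - 2*a) * ((a:ℝ) - 2) :=
      mul_nonneg (by linarith) (by linarith)
    have s1 : Δr * (2 * (n:ℝ)) * ((a:ℝ) - 1) ≤ ((d:ℝ) - lam) * ((n:ℝ) - 4) * ((a:ℝ) - 1) :=
      mul_le_mul_of_nonneg_right hdel' (by linarith)
    have s2 : ((d:ℝ) - lam) * (3 * (n:ℝ) - 4)
        ≤ 2 * (((d:ℝ) - lam) * a * ((n:ℝ) - a)) - ((d:ℝ) - lam) * ((n:ℝ) - 4) * ((a:ℝ) - 1) := by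
      have expand : 2 * (((d:ℝ) - lam) * a * ((n:ℝ) - a)) - ((d:ℝ) - lam) * ((n:ℝ) - 4) * ((a:ℝ) - 1)
          - ((d:ℝ) - lam) * (3 * (n:ℝ) - 4) = ((d:ℝ) - lam) * (((n:ℝ) - 2*a) * ((a:ℝ) - 2)) := by
        ring
      linarith [mul_nonneg hdl key, expand]
    have s3 : 2 * (n:ℝ) * d ≤ ((d:ℝ) - lam) * (3 * (n:ℝ) - 4) := by
      have expand3 : ((d:ℝ) - lam) * (3 * (n:ℝ) - 4) - 2 * (n:ℝ) * d
          = (d:ℝ) * ((n:ℝ) - 4) - lam * (3 * (n:ℝ) - 4) := by ring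
      linarith [hlam', expand3]
    have m1 : (n:ℝ) * (cutC G U : ℝ) ≤ (n:ℝ) * (N + (cutC H U : ℝ)) :=
      mul_le_mul_of_nonneg_left F1r hn0.le
    have m2 : (n:ℝ) * (cutC H U : ℝ) ≤ (n:ℝ) * (Δr * a) :=
      mul_le_mul_of_nonneg_left F2r hn0.le
    have s4 : (n:ℝ) * d ≤ (n:ℝ) * (N + Δr) := by linarith [F3, m1, m2, s1, s2, s3]
    have s5 : (d:ℝ) ≤ N + Δr := le_of_mul_le_mul_left s4 hn0
    rw [hNdef, hΔr] at s5
    exact_mod_cast s5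

lemma cutC_ge_all [Fintype V] {G H : SimpleGraph V} {d : ℕ} {lam : ℝ}
    (hndl : IsNDL G d lam) (hd3 : 3 ≤ d) (hn4 : 4 ≤ Fintype.card V)
    (hlam : lam ≤ (d : ℝ) * ((Fintype.card V : ℝ) - 4) / (3 * (Fintype.card V : ℝ) - 4))
    (hdel : (maxDeg H : ℝ) ≤ ((d : ℝ) - lam) / 2 * (1 - 4 / (Fintype.card V : ℝ)))
    (U : Finset V) (hU1 : U.Nonempty) (hU2 : U ≠ Finset.univ) :
    d ≤ cutC (G \ H) U + maxDeg H := by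
  classical
  have hUlt : U.card < Fintype.card V := by
    rw [← Finset.card_univ]
    exact Finset.card_lt_card (Finset.ssubset_univ_iff.mpr hU2)
  rcases le_or_gt (2 * U.card) (Fintype.card V) with h | h
  · exact cutC_ge_main hndl hd3 hn4 hlam hdel U hU1 h
  · have hcard : (Finset.univ \ U).card = Fintype.card V - U.card := by
      rw [Finset.card_sdiff_of_subset (Finset.subset_univ U), Finset.card_univ]
    have h1 : (Finset.univ \ U).Nonempty := by
      rw [← Finset.card_pos, hcard]; omega
    have h2 : 2 * (Finset.univ \ U).card ≤ Fintype.card V := by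
      rw [hcard]; omega
    have := cutC_ge_main hndl hd3 hn4 hlam hdel (Finset.univ \ U) h1 h2
    rwa [cutC_symm] at this

end MyAux

/-- for an (n,d,λ)-graph with 3 ≤ d ≤ n-1 and
λ ≤ d(n-4)/(3n-4), removing any H with Δ(H) ≤ (d-λ)/2·(1-4/n) leaves a
(d - Δ(H))-edge-connected graph. -/
theorem stmt3 {V : Type*} [Fintype V] (G : SimpleGraph V) (d : ℕ) (lam : ℝ)
    (hd3 : 3 ≤ d) (hdn : d ≤ Fintype.card V - 1) (hndl : IsNDL G d lam)
    (hlam : lam ≤ (d : ℝ) * ((Fintype.card V : ℝ) - 4) / (3 * (Fintype.card V : ℝ) - 4)) :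
    ∀ H ≤ G, (maxDeg H : ℝ) ≤ ((d : ℝ) - lam) / 2 * (1 - 4 / (Fintype.card V : ℝ)) →
      EdgeConnK (G \ H) (d - maxDeg H) := by
  classical
  intro H _hHG hdel s hs
  have hn4 : 4 ≤ Fintype.card V := by
    rcases Nat.eq_zero_or_pos (Fintype.card V) with h | h
    · omega
    · omega
  have hne : Nonempty V := by
    rw [← Fintype.card_pos_iff]; omega
  rw [SimpleGraph.connected_iff]
  refine ⟨?_, hne⟩
  intro u v
  by_contra hnr
  set G' := (G \ H).deleteEdges (↑s : Set (Sym2 V)) with hG'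
  set U : Finset V := Finset.univ.filter (fun w => G'.Reachable u w) with hU
  have hu : u ∈ U := by
    rw [hU, Finset.mem_filter]
    exact ⟨Finset.mem_univ u, SimpleGraph.Reachable.refl u⟩
  have hv : v ∉ U := by
    rw [hU, Finset.mem_filter]
    rintro ⟨-, h⟩
    exact hnr h
  have hU1 : U.Nonempty := ⟨u, hu⟩
  have hU2 : U ≠ Finset.univ := fun h => hv (h ▸ Finset.mem_univ v)
  have key := cutC_ge_all hndl hd3 hn4 hlam hdel U hU1 hU2
  -- every (G \ H)-edge across the cut lies in s
  have hcross : ∀ p ∈ (U ×ˢ (Finset.univ \ U)).filter (fun p : V × V => (G \ H).Adj p.1 p.2),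
      s(p.1, p.2) ∈ s := by
    rintro ⟨p1, p2⟩ hp
    rw [Finset.mem_filter, Finset.mem_product] at hp
    obtain ⟨⟨hp1, hp2⟩, hadj⟩ := hp
    by_contra hns
    have hadj' : G'.Adj p1 p2 := by
      rw [hG', SimpleGraph.deleteEdges_adj]
      exact ⟨hadj, by simpa using hns⟩
    have hreach : G'.Reachable u p2 := by
      rw [hU, Finset.mem_filter] at hp1
      exact hp1.2.trans hadj'.reachable
    rw [Finset.mem_sdiff, hU, Finset.mem_filter] at hp2
    exact hp2.2 ⟨Finset.mem_univ p2, hreach⟩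
  have hinj : Set.InjOn (fun p : V × V => s(p.1, p.2))
      ((U ×ˢ (Finset.univ \ U)).filter (fun p : V × V => (G \ H).Adj p.1 p.2)) := by
    rintro ⟨p1, p2⟩ hp ⟨q1, q2⟩ hq heq
    rw [Finset.coe_filter, Set.mem_setOf_eq, Finset.mem_product] at hp hq
    simp only [Sym2.eq, Sym2.rel_iff', Prod.mk.injEq, Prod.swap_prod_mk] at heq
    rcases heq with ⟨h1, h2⟩ | ⟨h1, h2⟩
    · simp [h1, h2]
    · exfalso
      have hq2 : q2 ∈ U := h1 ▸ hp.1.1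
      have := (Finset.mem_sdiff.mp hq.1.2).2
      exact this hq2
  have hcard : ((U ×ˢ (Finset.univ \ U)).filter (fun p : V × V => (G \ H).Adj p.1 p.2)).card
      ≤ s.card := Finset.card_le_card_of_injOn _ hcross hinj
  have hcut : cutC (G \ H) U
      = ((U ×ˢ (Finset.univ \ U)).filter (fun p : V × V => (G \ H).Adj p.1 p.2)).card := by
    rw [Finset.card_filter, Finset.sum_product]
    unfold cutC
    congr!
  omega
end

section
/- For every graph G = (V,E) on 2n vertices with maximum degree Δ(G) ≥ 3, there exists a partition V = V₁ ∪ V₂ with |V₁| = |V₂| = n such that the bipartite subgraph of G between V₁ and V₂ has minimum degree at least δ(G)/2 − 5√(Δ(G)·ln Δ(G)). -/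
open SimpleGraph Real
open scoped Classical

variable {V : Type*}

open Finset
set_option maxHeartbeats 1000000

section LLLsec


variable {I : Type*} [Fintype I] [DecidableEq I]
variable {ι : Type*} [Fintype ι] [DecidableEq ι]

noncomputable def mrg (a : Finset I) (ω ω' : I → Bool) : I → Bool :=
  fun j => if j ∈ a then ω j else ω' j

lemma indep_count (a : Finset I) (E F : Finset (I → Bool))
    (hE : ∀ ω ω' : I → Bool, (∀ j ∈ a, ω j = ω' j) → ω ∈ E → ω' ∈ E)
    (hF : ∀ ω ω' : I → Bool, (∀ j ∉ a, ω j = ω' j) → ω ∈ F → ω' ∈ F) :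
    E.card * F.card = (E ∩ F).card * 2 ^ (Fintype.card I) := by
  have h2 : (univ : Finset (I → Bool)).card = 2 ^ (Fintype.card I) := by
    simp [Finset.card_univ, Fintype.card_fun]
  rw [← h2, ← Finset.card_product, ← Finset.card_product]
  apply Finset.card_bij' (fun p _ => (mrg a p.1 p.2, mrg a p.2 p.1))
    (fun p _ => (mrg a p.1 p.2, mrg a p.2 p.1))
  · rintro ⟨ω, ω'⟩ hp
    simp only [Finset.mem_product] at hp ⊢
    refine ⟨Finset.mem_inter.2 ⟨?_, ?_⟩, Finset.mem_univ _⟩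
    · exact hE ω _ (fun j hj => by simp [mrg, hj]) hp.1
    · exact hF ω' _ (fun j hj => by simp [mrg, hj]) hp.2
  · rintro ⟨ω, ω'⟩ hp
    simp only [Finset.mem_product, Finset.mem_inter] at hp
    simp only [Finset.mem_product]
    constructor
    · exact hE ω _ (fun j hj => by simp [mrg, hj]) hp.1.1
    · exact hF ω _ (fun j hj => by simp [mrg, hj]) hp.1.2
  · rintro ⟨ω, ω'⟩ _
    simp only [Prod.mk.injEq]
    constructor <;> (funext j; by_cases hj : j ∈ a <;> simp [mrg, hj])
  · rintro ⟨ω, ω'⟩ _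
    simp only [Prod.mk.injEq]
    constructor <;> (funext j; by_cases hj : j ∈ a <;> simp [mrg, hj])

noncomputable def GoodSet (A : ι → Finset (I → Bool)) (s : Finset ι) : Finset (I → Bool) :=
  univ.filter (fun ω => ∀ k ∈ s, ω ∉ A k)

lemma goodSet_insert (A : ι → Finset (I → Bool)) (k : ι) (s : Finset ι) :
    GoodSet A (insert k s) = GoodSet A s \ A k := by
  ext ω
  simp only [GoodSet, Finset.mem_filter, Finset.mem_univ, true_and, Finset.mem_sdiff,
    Finset.mem_insert]
  constructor
  · intro h; exact ⟨fun l hl => h l (Or.inr hl), h k (Or.inl rfl)⟩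
  · rintro ⟨h1, h2⟩ l (rfl | hl); · exact h2
    · exact h1 l hl

lemma goodSet_card_insert (A : ι → Finset (I → Bool)) (k : ι) (s : Finset ι) :
    ((GoodSet A (insert k s)).card : ℝ) =
      (GoodSet A s).card - ((A k ∩ GoodSet A s).card : ℝ) := by
  rw [goodSet_insert]
  have := Finset.card_inter_add_card_sdiff (GoodSet A s) (A k)
  have h' : (GoodSet A s ∩ A k).card + (GoodSet A s \ A k).card = (GoodSet A s).card := this
  rw [Finset.inter_comm] at h'
  push_cast [← h']
  ring

lemma goodSet_anti (A : ι → Finset (I → Bool)) {s t : Finset ι} (h : s ⊆ t) :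
    GoodSet A t ⊆ GoodSet A s := by
  intro ω hω
  simp only [GoodSet, Finset.mem_filter, Finset.mem_univ, true_and] at hω ⊢
  exact fun k hk => hω k (h hk)

lemma lll (A : ι → Finset (I → Bool)) (vbl : ι → Finset I)
    (hdet : ∀ k, ∀ ω ω' : I → Bool, (∀ j ∈ vbl k, ω j = ω' j) → ω ∈ A k → ω' ∈ A k)
    (x : ℝ) (hx0 : 0 < x) (hx1 : x < 1) (D : ℕ)
    (hdeg : ∀ k, ((univ.filter fun l => l ≠ k ∧ (vbl k ∩ vbl l).Nonempty).card ≤ D))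
    (hp : ∀ k, ((A k).card : ℝ) ≤ x * (1-x)^D * 2 ^ (Fintype.card I)) :
    ∃ ω : I → Bool, ∀ k, ω ∉ A k := by
  have hx1' : (0:ℝ) < 1 - x := by linarith
  have h2N : (0:ℝ) < 2 ^ (Fintype.card I) := by positivity
  -- main claim by strong induction
  have claim : ∀ m : ℕ, ∀ s : Finset ι, s.card ≤ m → ∀ k ∉ s,
      ((A k ∩ GoodSet A s).card : ℝ) ≤ x * (GoodSet A s).card := by
    intro m
    induction m with
    | zero =>
      intro s hs k _
      have : s = ∅ := Finset.card_eq_zero.1 (Nat.le_zero.1 hs)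
      subst this
      have hG : GoodSet A (∅ : Finset ι) = univ := by
        simp [GoodSet]
      rw [hG, Finset.inter_univ, Finset.card_univ, Fintype.card_fun]
      calc ((A k).card : ℝ) ≤ x * (1-x)^D * 2 ^ (Fintype.card I) := hp k
        _ ≤ x * 1 * 2 ^ (Fintype.card I) := by
            apply mul_le_mul_of_nonneg_right _ (le_of_lt h2N)
            apply mul_le_mul_of_nonneg_left _ (le_of_lt hx0)
            exact pow_le_one₀ (le_of_lt hx1') (by linarith)
        _ = x * ((Fintype.card Bool) ^ (Fintype.card I) : ℕ) := by
            push_cast [Fintype.card_bool]; ring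
    | succ m ih =>
      intro s hs k hk
      set s₁ := s.filter (fun l => (vbl k ∩ vbl l).Nonempty) with hs₁
      set s₂ := s \ s₁ with hs₂
      have hs₁sub : s₁ ⊆ s := Finset.filter_subset _ _
      have hunion : s₂ ∪ s₁ = s := Finset.sdiff_union_of_subset hs₁sub
      -- Step C : build up from s₂
      have stepC : ∀ u : Finset ι, u ⊆ s₁ →
          (1-x) ^ u.card * ((GoodSet A s₂).card : ℝ) ≤ (GoodSet A (s₂ ∪ u)).card := by
        intro u
        induction u using Finset.induction_on with
        | empty => intro _; simp
        | @insert k' u hk' ihu =>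
          intro hins
          have hk's₁ : k' ∈ s₁ := hins (Finset.mem_insert_self _ _)
          have hu : u ⊆ s₁ := fun l hl => hins (Finset.mem_insert_of_mem hl)
          have hk'notin : k' ∉ s₂ ∪ u := by
            simp only [Finset.mem_union]
            rintro (h | h)
            · exact (Finset.mem_sdiff.1 h).2 hk's₁
            · exact hk' h
          have hcard : (s₂ ∪ u).card ≤ m := by
            have hsub : s₂ ∪ u ⊆ s.erase k' := by
              intro l hl
              rcases Finset.mem_union.1 hl with h | h
              · exact Finset.mem_erase.2 ⟨fun he => hk'notin (he ▸ hl), (Finset.mem_sdiff.1 h).1⟩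
              · exact Finset.mem_erase.2 ⟨fun he => hk'notin (he ▸ hl), hs₁sub (hu h)⟩
            calc (s₂ ∪ u).card ≤ (s.erase k').card := Finset.card_le_card hsub
              _ = s.card - 1 := Finset.card_erase_of_mem (hs₁sub hk's₁)
              _ ≤ m := by omega
          have hih := ih (s₂ ∪ u) hcard k' hk'notin
          have : s₂ ∪ insert k' u = insert k' (s₂ ∪ u) := Finset.union_insert _ _ _
          rw [this, goodSet_card_insert]
          have hbase := ihu hu
          calc (1-x) ^ (insert k' u).card * ((GoodSet A s₂).card : ℝ)
              = (1-x) * ((1-x) ^ u.card * (GoodSet A s₂).card) := by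
                rw [Finset.card_insert_of_notMem hk']; ring
            _ ≤ (1-x) * (GoodSet A (s₂ ∪ u)).card := by
                apply mul_le_mul_of_nonneg_left hbase (le_of_lt hx1')
            _ ≤ ((GoodSet A (s₂ ∪ u)).card : ℝ) - (A k' ∩ GoodSet A (s₂ ∪ u)).card := by
                nlinarith [hih]
      -- Step B : independence
      have hdisj : ∀ l ∈ s₂, ∀ j ∈ vbl l, j ∉ vbl k := by
        intro l hl j hj hjk
        have : l ∉ s₁ := (Finset.mem_sdiff.1 hl).2
        exact this (Finset.mem_filter.2 ⟨(Finset.mem_sdiff.1 hl).1, ⟨j, Finset.mem_inter.2 ⟨hjk, hj⟩⟩⟩)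
      have hFdet : ∀ ω ω' : I → Bool, (∀ j ∉ vbl k, ω j = ω' j) →
          ω ∈ GoodSet A s₂ → ω' ∈ GoodSet A s₂ := by
        intro ω ω' hagree hω
        simp only [GoodSet, Finset.mem_filter, Finset.mem_univ, true_and] at hω ⊢
        intro l hl hmem
        exact hω l hl (hdet l ω' ω (fun j hj => (hagree j (hdisj l hl j hj)).symm) hmem)
      have hindep := indep_count (vbl k) (A k) (GoodSet A s₂) (hdet k) hFdet
      have hAB : ((A k ∩ GoodSet A s₂).card : ℝ) * 2 ^ (Fintype.card I)
          = (A k).card * (GoodSet A s₂).card := by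
        exact_mod_cast congrArg (fun z : ℕ => (z : ℝ)) hindep.symm
      have hAkG2 : ((A k ∩ GoodSet A s₂).card : ℝ) ≤ x * (1-x)^D * (GoodSet A s₂).card := by
        rw [← mul_le_mul_iff_of_pos_right h2N, hAB]
        calc ((A k).card : ℝ) * (GoodSet A s₂).card
            ≤ (x * (1-x)^D * 2 ^ (Fintype.card I)) * (GoodSet A s₂).card := by
              apply mul_le_mul_of_nonneg_right (hp k) (Nat.cast_nonneg _)
          _ = x * (1-x)^D * (GoodSet A s₂).card * 2 ^ (Fintype.card I) := by ring
      -- Step D : s₁.card ≤ D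
      have hs₁D : s₁.card ≤ D := by
        refine le_trans (Finset.card_le_card ?_) (hdeg k)
        intro l hl
        have hls := Finset.mem_filter.1 hl
        exact Finset.mem_filter.2 ⟨Finset.mem_univ _,
          ⟨fun he => hk (he ▸ hls.1), hls.2⟩⟩
      have hGs : (1-x)^D * ((GoodSet A s₂).card : ℝ) ≤ (GoodSet A s).card := by
        have := stepC s₁ (le_refl s₁)
        rw [hunion] at this
        refine le_trans ?_ this
        apply mul_le_mul_of_nonneg_right _ (Nat.cast_nonneg _)
        exact pow_le_pow_of_le_one (le_of_lt hx1') (by linarith) hs₁D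
      -- combine
      have hmono : (A k ∩ GoodSet A s).card ≤ (A k ∩ GoodSet A s₂).card := by
        apply Finset.card_le_card
        apply Finset.inter_subset_inter (le_refl _)
        exact goodSet_anti A (by rw [← hunion]; exact Finset.subset_union_left)
      calc ((A k ∩ GoodSet A s).card : ℝ) ≤ (A k ∩ GoodSet A s₂).card := by exact_mod_cast hmono
        _ ≤ x * (1-x)^D * (GoodSet A s₂).card := hAkG2
        _ = x * ((1-x)^D * (GoodSet A s₂).card) := by ring
        _ ≤ x * (GoodSet A s).card := mul_le_mul_of_nonneg_left hGs (le_of_lt hx0)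
  -- positivity
  have pos : ∀ s : Finset ι, (0:ℝ) < (GoodSet A s).card := by
    intro s
    induction s using Finset.induction_on with
    | empty => simp [GoodSet]
    | @insert k s hk ihs =>
      rw [goodSet_card_insert]
      have := claim s.card s (le_refl _) k hk
      nlinarith
  have : (GoodSet A univ).Nonempty := by
    rw [← Finset.card_pos]
    exact_mod_cast pos univ
  obtain ⟨ω, hω⟩ := this
  simp only [GoodSet, Finset.mem_filter] at hω
  exact ⟨ω, fun k => hω.2 k (Finset.mem_univ k)⟩

end LLLsec

section Helpers
variable {V : Type*} [Fintype V] {n : ℕ} (e : V ≃ Fin n × Bool)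

noncomputable def inSb (ω : Fin n → Bool) (v : V) : Bool := ω (e v).1 == (e v).2

noncomputable def crossCt (G : SimpleGraph V) (ω : Fin n → Bool) (v : V) : ℕ :=
  ((G.neighborFinset v).filter (fun u => inSb e ω u ≠ inSb e ω v)).card

lemma degN_eq_card (G : SimpleGraph V) (v : V) : degN G v = (G.neighborFinset v).card := by
  rw [degN, neighborFinset_def, Set.ncard_eq_toFinset_card']

lemma balanced (ω : Fin n → Bool) :
    (univ.filter (fun v : V => inSb e ω v = true)).card = n := by
  have h1 : (univ.filter (fun v : V => inSb e ω v = true)).card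
      = (univ.filter (fun p : Fin n × Bool => ω p.1 = p.2)).card := by
    apply Finset.card_bij (fun v _ => e v)
    · intro v hv
      simp only [Finset.mem_filter, Finset.mem_univ, true_and] at hv ⊢
      simpa [inSb] using hv
    · intro u _ v _ h
      exact e.injective h
    · intro p hp
      refine ⟨e.symm p, ?_, by simp⟩
      simp only [Finset.mem_filter, Finset.mem_univ, true_and] at hp ⊢
      simpa [inSb] using hp
  rw [h1]
  have h2 : (univ.filter (fun p : Fin n × Bool => ω p.1 = p.2))
      = univ.image (fun i : Fin n => (i, ω i)) := by
    ext p
    simp only [Finset.mem_filter, Finset.mem_univ, true_and, Finset.mem_image]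
    constructor
    · intro h
      exact ⟨p.1, by rw [h]⟩
    · rintro ⟨i, rfl⟩
      rfl
  rw [h2, Finset.card_image_of_injective _ (fun i j h => congrArg Prod.fst h),
    Finset.card_univ, Fintype.card_fin]

lemma degN_bipartite (G : SimpleGraph V) (ω : Fin n → Bool) (v : V) :
    degN (bipartiteBetween G {u | inSb e ω u = true}) v = crossCt e G ω v := by
  rw [degN, Set.ncard_eq_toFinset_card', crossCt]
  congr 1
  ext u
  rw [Set.mem_toFinset]
  constructor
  · rintro ⟨hadj, hside⟩
    refine Finset.mem_filter.2 ⟨(SimpleGraph.mem_neighborFinset _ _ _).2 hadj, ?_⟩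
    cases hu : inSb e ω u <;> cases hv : inSb e ω v <;>
      simp_all [Set.mem_setOf_eq]
  · rintro hmem
    obtain ⟨hN, hne⟩ := Finset.mem_filter.1 hmem
    have hadj := (SimpleGraph.mem_neighborFinset _ _ _).1 hN
    refine ⟨hadj, ?_⟩
    cases hu : inSb e ω u <;> cases hv : inSb e ω v <;>
      simp_all [Set.mem_setOf_eq]

lemma fiber_card (i : Fin n) : (univ.filter (fun u : V => (e u).1 = i)).card = 2 := by
  have h1 : (univ.filter (fun u : V => (e u).1 = i)).card
      = (univ.filter (fun p : Fin n × Bool => p.1 = i)).card := by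
    apply Finset.card_bij (fun v _ => e v)
    · intro v hv
      simp only [Finset.mem_filter, Finset.mem_univ, true_and] at hv ⊢
      exact hv
    · intro u _ v _ h
      exact e.injective h
    · intro p hp
      refine ⟨e.symm p, ?_, by simp⟩
      simp only [Finset.mem_filter, Finset.mem_univ, true_and] at hp ⊢
      simpa using hp
  rw [h1]
  have h2 : (univ.filter (fun p : Fin n × Bool => p.1 = i))
      = univ.image (fun b : Bool => (i, b)) := by
    ext p
    simp only [Finset.mem_filter, Finset.mem_univ, true_and, Finset.mem_image]
    constructor
    · intro h
      exact ⟨p.2, by rw [← h]⟩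
    · rintro ⟨b, rfl⟩
      rfl
  rw [h2, Finset.card_image_of_injective _ (fun a b h => (Prod.ext_iff.1 h).2),
    Finset.card_univ, Fintype.card_bool]

end Helpers

section PerVertex
variable {V : Type*} [Fintype V] {n : ℕ} (e : V ≃ Fin n × Bool) (G : SimpleGraph V) (v : V)

noncomputable def Pfib (i : Fin n) : Finset V :=
  (G.neighborFinset v).filter (fun u => (e u).1 = i)

noncomputable def Mset : Finset (Fin n) :=
  univ.filter (fun i : Fin n => i ≠ (e v).1 ∧ (Pfib e G v i).card = 1)

noncomputable def Xct (ω : Fin n → Bool) : ℕ :=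
  ((Mset e G v).filter (fun i => ∃ u ∈ Pfib e G v i, inSb e ω u ≠ inSb e ω v)).card

lemma bool_ne_iff (a b : Bool) : a ≠ b ↔ a = !b := by revert a b; decide

lemma bool_beq_eq (a b c : Bool) : ((a == b) = c) ↔ (a = (b == c)) := by revert a b c; decide

lemma opp_of_fiber_ne (ω : Fin n → Bool) {u : V} (hu : u ∈ G.neighborFinset v)
    (h1 : (e u).1 = (e v).1) : inSb e ω u ≠ inSb e ω v := by
  have hne : u ≠ v := G.ne_of_adj ((SimpleGraph.mem_neighborFinset _ _ _).1 hu).symm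
  have h2 : (e u).2 ≠ (e v).2 := by
    intro h2
    exact hne (e.injective (Prod.ext h1 h2))
  rw [bool_ne_iff] at h2
  simp only [inSb, h1, h2]
  revert ω
  intro ω
  cases ω (e v).1 <;> cases (e v).2 <;> decide

lemma opp_pair (ω : Fin n → Bool) {u u' : V} (hu : u ∈ G.neighborFinset v)
    (hu' : u' ∈ G.neighborFinset v) (hne : u ≠ u') (h1 : (e u).1 = (e u').1) :
    inSb e ω u ≠ inSb e ω u' := by
  have h2 : (e u).2 ≠ (e u').2 := by
    intro h2
    exact hne (e.injective (Prod.ext h1 h2))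
  rw [bool_ne_iff] at h2
  simp only [inSb, h1, h2]
  cases ω (e u').1 <;> cases (e u').2 <;> decide

lemma Pfib_card_le_two (i : Fin n) : (Pfib e G v i).card ≤ 2 := by
  rw [← fiber_card e i]
  apply Finset.card_le_card
  intro u hu
  simp only [Pfib, Finset.mem_filter] at hu ⊢
  exact ⟨Finset.mem_univ _, hu.2⟩

lemma cross_lower (ω : Fin n → Bool) :
    (G.neighborFinset v).card + 2 * Xct e G v ω
      ≤ 2 * crossCt e G ω v + (Mset e G v).card := by
  have hd : (G.neighborFinset v).card = ∑ i : Fin n, (Pfib e G v i).card := by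
    apply Finset.card_eq_sum_card_fiberwise (fun u _ => Finset.mem_univ ((e u).1))
  have hcr : crossCt e G ω v
      = ∑ i : Fin n, ((Pfib e G v i).filter (fun u => inSb e ω u ≠ inSb e ω v)).card := by
    rw [crossCt]
    rw [Finset.card_eq_sum_card_fiberwise
      (f := fun u => (e u).1) (t := univ) (fun u _ => Finset.mem_univ _)]
    congr 1
    funext i
    congr 1
    rw [Pfib, Finset.filter_comm]
  have hX : Xct e G v ω = ∑ i : Fin n,
      if i ∈ Mset e G v ∧ (∃ u ∈ Pfib e G v i, inSb e ω u ≠ inSb e ω v) then 1 else 0 := by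
    have h1 : ∑ i ∈ Mset e G v,
        (if (∃ u ∈ Pfib e G v i, inSb e ω u ≠ inSb e ω v) then 1 else 0)
        = ∑ i ∈ Mset e G v, (if i ∈ Mset e G v ∧
            (∃ u ∈ Pfib e G v i, inSb e ω u ≠ inSb e ω v) then 1 else 0) := by
      apply Finset.sum_congr rfl
      intro i hi
      by_cases h2 : ∃ u ∈ Pfib e G v i, inSb e ω u ≠ inSb e ω v <;> simp [hi, h2]
    rw [Xct, Finset.card_filter, h1]
    apply Finset.sum_subset (Finset.subset_univ _)
    intro i _ hi
    rw [if_neg (fun hc => hi hc.1)]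
  have hM : (Mset e G v).card = ∑ i : Fin n, if i ∈ Mset e G v then 1 else 0 := by
    rw [← Finset.sum_filter, Finset.sum_const, smul_eq_mul, mul_one]
    congr 1
    ext i
    simp [Finset.mem_filter]
  rw [hd, hcr, hX, hM, Finset.mul_sum, Finset.mul_sum, ← Finset.sum_add_distrib,
    ← Finset.sum_add_distrib]
  apply Finset.sum_le_sum
  intro i _
  by_cases hiM : i ∈ Mset e G v
  · have hc1 : (Pfib e G v i).card = 1 := (Finset.mem_filter.1 hiM).2.2
    by_cases hex : ∃ u ∈ Pfib e G v i, inSb e ω u ≠ inSb e ω v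
    · obtain ⟨u, hu, hopp⟩ := hex
      have : 1 ≤ ((Pfib e G v i).filter (fun u => inSb e ω u ≠ inSb e ω v)).card := by
        apply Finset.card_pos.2
        exact ⟨u, Finset.mem_filter.2 ⟨hu, hopp⟩⟩
      rw [if_pos ⟨hiM, ⟨u, hu, hopp⟩⟩, if_pos hiM, hc1]
      omega
    · rw [if_neg (fun hc => hex hc.2), if_pos hiM, hc1]
      omega
  · rw [if_neg (fun hc => hiM hc.1), if_neg hiM]
    by_cases hi0 : i = (e v).1
    · have hall : (Pfib e G v i).filter (fun u => inSb e ω u ≠ inSb e ω v) = Pfib e G v i := by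
        apply Finset.filter_true_of_mem
        intro u hu
        have hmem := Finset.mem_filter.1 hu
        exact opp_of_fiber_ne e G v ω hmem.1 (hmem.2.trans hi0)
      rw [hall]
      omega
    · have hcne : (Pfib e G v i).card ≠ 1 := fun h =>
        hiM (Finset.mem_filter.2 ⟨Finset.mem_univ _, hi0, h⟩)
      have hle2 := Pfib_card_le_two e G v i
      rcases (show (Pfib e G v i).card = 0 ∨ (Pfib e G v i).card = 2 by omega) with h0 | h2
      · rw [h0]
        omega
      · obtain ⟨u, hu, u', hu', hne⟩ := Finset.one_lt_card.1
          (by omega : 1 < (Pfib e G v i).card)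
        have hmu := Finset.mem_filter.1 hu
        have hmu' := Finset.mem_filter.1 hu'
        have hopp2 := opp_pair e G v ω hmu.1 hmu'.1 hne (hmu.2.trans hmu'.2.symm)
        have hex2 : ∃ w ∈ Pfib e G v i, inSb e ω w ≠ inSb e ω v := by
          by_cases h : inSb e ω u = inSb e ω v
          · exact ⟨u', hu', fun hc => hopp2 (h.trans hc.symm)⟩
          · exact ⟨u, hu, h⟩
        obtain ⟨w, hw, hwopp⟩ := hex2
        have h1le : 1 ≤ ((Pfib e G v i).filter (fun u => inSb e ω u ≠ inSb e ω v)).card :=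
          Finset.card_pos.2 ⟨w, Finset.mem_filter.2 ⟨hw, hwopp⟩⟩
        omega
end PerVertex


section Chernoff
variable {I : Type*} [Fintype I] [DecidableEq I]

set_option maxHeartbeats 1000000



lemma chernoff_count (M : Finset I) (i₀ : I) (hi₀ : i₀ ∉ M) (c : Bool) (τ : I → Bool)
    (t : ℝ) (ht : 0 < t) (hm : 0 < M.card) :
    ((univ.filter (fun ω : I → Bool => ω i₀ = c ∧
        ((M.filter (fun i => ω i = τ i)).card : ℝ) ≤ (M.card : ℝ)/2 - t)).card : ℝ)
      ≤ 2 ^ (Fintype.card I - 1) * Real.exp (-2*t^2/(M.card : ℝ)) := by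
  set n := Fintype.card I with hn
  set mR : ℝ := (M.card : ℝ) with hmR
  have hmR0 : (0:ℝ) < mR := by rw [hmR]; exact_mod_cast hm
  set lam : ℝ := 4*t/mR with hlam
  have hlam0 : 0 < lam := by positivity
  have hmn : M.card + 1 ≤ n := by
    have : insert i₀ M ⊆ univ := Finset.subset_univ _
    have := Finset.card_le_card this
    rw [Finset.card_insert_of_notMem hi₀, Finset.card_univ] at this
    omega
  set g : I → Bool → ℝ := fun i b =>
    if i = i₀ then (if b = c then 1 else 0)
    else if i ∈ M then Real.exp (-lam * (if b = τ i then 1 else 0)) else 1 with hg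
  have hgnonneg : ∀ i b, 0 ≤ g i b := by
    intro i b
    simp only [hg]
    split_ifs <;> first | exact Real.exp_nonneg _ | norm_num
  -- pointwise bound on the bad set
  have hpt : ∀ ω : I → Bool, ω i₀ = c →
      ((M.filter (fun i => ω i = τ i)).card : ℝ) ≤ mR/2 - t →
      1 ≤ Real.exp (lam * (mR/2 - t)) * ∏ i, g i (ω i) := by
    intro ω hωc hX
    have hprod : ∏ i, g i (ω i) = Real.exp (-lam * ((M.filter (fun i => ω i = τ i)).card : ℝ)) := by
      rw [← Finset.prod_subset (Finset.subset_univ M)]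
      · have : ∀ i ∈ M, g i (ω i) = Real.exp (-lam * (if ω i = τ i then 1 else 0)) := by
          intro i hi
          have : i ≠ i₀ := fun h => hi₀ (h ▸ hi)
          simp [hg, this, hi]
        rw [Finset.prod_congr rfl this, ← Real.exp_sum]
        rw [← Finset.mul_sum]
        congr 1
        push_cast
        rw [Finset.sum_boole]
      · intro i _ hiM
        by_cases h : i = i₀
        · simp [hg, h, hωc]
        · simp [hg, h, hiM]
    rw [hprod, ← Real.exp_add]
    rw [show lam * (mR/2 - t) + -lam * ((M.filter (fun i => ω i = τ i)).card : ℝ)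
        = lam * ((mR/2 - t) - ((M.filter (fun i => ω i = τ i)).card : ℝ)) by ring]
    rw [show (1:ℝ) = Real.exp 0 by simp]
    apply Real.exp_le_exp.2
    have : (0:ℝ) ≤ (mR/2 - t) - ((M.filter (fun i => ω i = τ i)).card : ℝ) := by linarith
    positivity
  -- sum over everything
  set E := univ.filter (fun ω : I → Bool => ω i₀ = c ∧
      ((M.filter (fun i => ω i = τ i)).card : ℝ) ≤ mR/2 - t) with hE
  have step1 : (E.card : ℝ) ≤ Real.exp (lam * (mR/2 - t)) * ∑ ω : I → Bool, ∏ i, g i (ω i) := by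
    rw [Finset.mul_sum]
    calc (E.card : ℝ) = ∑ ω ∈ E, (1:ℝ) := by simp
      _ ≤ ∑ ω ∈ E, Real.exp (lam * (mR/2 - t)) * ∏ i, g i (ω i) := by
          apply Finset.sum_le_sum
          intro ω hω
          rw [hE, Finset.mem_filter] at hω
          exact hpt ω hω.2.1 hω.2.2
      _ ≤ ∑ ω : I → Bool, Real.exp (lam * (mR/2 - t)) * ∏ i, g i (ω i) := by
          apply Finset.sum_le_sum_of_subset_of_nonneg (Finset.subset_univ E)
          intro ω _ _
          have : (0:ℝ) ≤ ∏ i, g i (ω i) := Finset.prod_nonneg (fun i _ => hgnonneg i _)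
          positivity
  have step2 : ∑ ω : I → Bool, ∏ i, g i (ω i) = ∏ i, (∑ b : Bool, g i b) := by
    rw [Finset.prod_univ_sum, Fintype.piFinset_univ]
  have hsumval : ∀ i : I, (∑ b : Bool, g i b) =
      if i = i₀ then 1 else if i ∈ M then 1 + Real.exp (-lam) else 2 := by
    intro i
    by_cases h : i = i₀
    · subst h
      rw [if_pos rfl]
      simp only [hg, if_pos rfl, Fintype.sum_bool]
      cases c <;> norm_num
    · by_cases hiM : i ∈ M
      · rw [if_neg h, if_pos hiM]
        simp only [hg, if_neg h, if_pos hiM, Fintype.sum_bool]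
        cases hτ : τ i <;> simp only [hτ] <;> norm_num [Real.exp_zero] <;> ring
      · simp [hg, h, hiM]
  have step3 : ∏ i, (∑ b : Bool, g i b) = (1 + Real.exp (-lam)) ^ M.card * 2 ^ (n - 1 - M.card) := by
    rw [Finset.prod_congr rfl (fun i _ => hsumval i)]
    rw [← Finset.mul_prod_erase univ _ (Finset.mem_univ i₀)]
    rw [if_pos rfl, one_mul]
    have hcongr : ∀ i ∈ univ.erase i₀,
        (if i = i₀ then (1:ℝ) else if i ∈ M then 1 + Real.exp (-lam) else 2)
          = if i ∈ M then 1 + Real.exp (-lam) else 2 := by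
      intro i hi
      rw [if_neg (Finset.mem_erase.1 hi).1]
    rw [Finset.prod_congr rfl hcongr, Finset.prod_ite, Finset.prod_const, Finset.prod_const]
    have h1 : (univ.erase i₀).filter (fun i => i ∈ M) = M := by
      ext i
      constructor
      · intro hi; exact (Finset.mem_filter.1 hi).2
      · intro hi
        exact Finset.mem_filter.2 ⟨Finset.mem_erase.2
          ⟨fun (he : i = i₀) => hi₀ (he ▸ hi), Finset.mem_univ i⟩, hi⟩
    have h2 : ((univ.erase i₀).filter (fun i => ¬ i ∈ M)).card = n - 1 - M.card := by
      have := Finset.card_filter_add_card_filter_not (s := univ.erase i₀)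
        (p := fun i => i ∈ M)
      rw [h1] at this
      have hc : (univ.erase i₀).card = n - 1 := by
        rw [Finset.card_erase_of_mem (Finset.mem_univ i₀), Finset.card_univ]
      omega
    rw [h1, h2]
  have hcosh : 1 + Real.exp (-lam) ≤ 2 * Real.exp (lam^2/8 - lam/2) := by
    have h := Real.cosh_le_exp_half_sq (lam/2)
    rw [Real.cosh_eq] at h
    have hp : (0:ℝ) < Real.exp (-lam/2) := Real.exp_pos _
    have e1 : Real.exp (-lam/2) * Real.exp (lam/2) = 1 := by
      rw [← Real.exp_add]; ring_nf; exact Real.exp_zero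
    have e2 : Real.exp (-lam/2) * Real.exp (-(lam/2)) = Real.exp (-lam) := by
      rw [← Real.exp_add]; congr 1; ring
    have e3 : Real.exp (-lam/2) * Real.exp ((lam/2)^2/2) = Real.exp (lam^2/8 - lam/2) := by
      rw [← Real.exp_add]; congr 1; ring
    have hBC : Real.exp (-lam/2) * (Real.exp (lam/2) + Real.exp (-(lam/2)))
        = 1 + Real.exp (-lam) := by rw [mul_add, e1, e2]
    calc 1 + Real.exp (-lam)
        = Real.exp (-lam/2) * (Real.exp (lam/2) + Real.exp (-(lam/2))) := hBC.symm
      _ ≤ Real.exp (-lam/2) * (2 * Real.exp ((lam/2)^2/2)) := by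
          apply mul_le_mul_of_nonneg_left _ (le_of_lt hp)
          linarith [h]
      _ = 2 * Real.exp (lam^2/8 - lam/2) := by
          rw [← mul_assoc, mul_comm (Real.exp (-lam/2)) 2, mul_assoc, e3]
  have hpow : (1 + Real.exp (-lam)) ^ M.card
      ≤ 2 ^ M.card * Real.exp (mR * (lam^2/8 - lam/2)) := by
    calc (1 + Real.exp (-lam)) ^ M.card ≤ (2 * Real.exp (lam^2/8 - lam/2)) ^ M.card := by
          apply pow_le_pow_left₀ (by positivity) hcosh
      _ = 2 ^ M.card * Real.exp (mR * (lam^2/8 - lam/2)) := by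
          rw [mul_pow, ← Real.exp_nat_mul, hmR]
  calc (E.card : ℝ)
      ≤ Real.exp (lam * (mR/2 - t)) * ((1 + Real.exp (-lam)) ^ M.card * 2 ^ (n - 1 - M.card)) := by
        rw [← step3, ← step2]; exact step1
    _ ≤ Real.exp (lam * (mR/2 - t)) * ((2 ^ M.card * Real.exp (mR * (lam^2/8 - lam/2))) * 2 ^ (n - 1 - M.card)) := by
        apply mul_le_mul_of_nonneg_left _ (Real.exp_nonneg _)
        apply mul_le_mul_of_nonneg_right hpow (by positivity)
    _ = (2:ℝ) ^ (M.card + (n - 1 - M.card)) * Real.exp (lam * (mR/2 - t) + mR * (lam^2/8 - lam/2)) := by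
        rw [pow_add, Real.exp_add]; ring
    _ = 2 ^ (n-1) * Real.exp (-2*t^2/mR) := by
        congr 2
        · omega
        · have hmne : mR ≠ 0 := ne_of_gt hmR0
          have hi : mR * mR⁻¹ = 1 := mul_inv_cancel₀ hmne
          have h4 : lam * mR = 4 * t := by rw [hlam]; exact div_mul_cancel₀ _ hmne
          linear_combination (lam/8 - t*mR⁻¹/2) * h4 + (lam*t/2) * hi

end Chernoff

section BadCard
variable {V : Type*} [Fintype V] {n : ℕ} (e : V ≃ Fin n × Bool) (G : SimpleGraph V) (v : V)

lemma bad_card (t : ℝ) (ht : 0 < t) (r : ℝ)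
    (hr : r + t ≤ ((G.neighborFinset v).card : ℝ) / 2)
    (Δ : ℕ) (hΔm : (Mset e G v).card ≤ Δ) (hΔ0 : 0 < Δ) :
    ((univ.filter (fun ω : Fin n → Bool => ((crossCt e G ω v : ℝ)) < r)).card : ℝ)
      ≤ 2 ^ n * Real.exp (-2 * t ^ 2 / (Δ : ℝ)) := by
  have hsub : ∀ ω : Fin n → Bool, ((crossCt e G ω v : ℝ)) < r →
      ((Xct e G v ω : ℝ)) ≤ ((Mset e G v).card : ℝ) / 2 - t := by
    intro ω hω
    have hcl := cross_lower e G v ω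
    have hcl' : ((G.neighborFinset v).card : ℝ) + 2 * (Xct e G v ω : ℝ)
        ≤ 2 * (crossCt e G ω v : ℝ) + ((Mset e G v).card : ℝ) := by exact_mod_cast hcl
    linarith
  by_cases hm0 : (Mset e G v).card = 0
  · have hemp : (univ.filter (fun ω : Fin n → Bool => ((crossCt e G ω v : ℝ)) < r)) = ∅ := by
      apply Finset.eq_empty_of_forall_notMem
      intro ω hω
      have hthis := hsub ω (Finset.mem_filter.1 hω).2
      rw [hm0] at hthis
      have hX0 : (0:ℝ) ≤ (Xct e G v ω : ℝ) := Nat.cast_nonneg _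
      norm_num at hthis
      linarith
    rw [hemp]
    simp only [Finset.card_empty, Nat.cast_zero]
    positivity
  have hm1 : 0 < (Mset e G v).card := Nat.pos_of_ne_zero hm0
  have hn1 : 1 ≤ n := by
    obtain ⟨i, -⟩ := Finset.card_pos.1 hm1
    have := i.isLt
    omega
  have hi₀M : (e v).1 ∉ Mset e G v := by
    intro h
    exact ((Finset.mem_filter.1 h).2.1) rfl
  set uch : Fin n → V := fun i => if h : (Pfib e G v i).Nonempty then h.choose else v with huchdef
  have huchmem : ∀ i ∈ Mset e G v, uch i ∈ Pfib e G v i := by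
    intro i hi
    have hc1 : (Pfib e G v i).card = 1 := (Finset.mem_filter.1 hi).2.2
    have hne : (Pfib e G v i).Nonempty := Finset.card_pos.1 (by omega)
    rw [huchdef]
    dsimp only
    rw [dif_pos hne]
    exact hne.choose_spec
  have huniq : ∀ i ∈ Mset e G v, ∀ u ∈ Pfib e G v i, u = uch i := by
    intro i hi u hu
    have hc1 : (Pfib e G v i).card = 1 := (Finset.mem_filter.1 hi).2.2
    exact Finset.card_le_one.1 (le_of_eq hc1) u hu (uch i) (huchmem i hi)
  have key : ∀ c : Bool,
      ((univ.filter (fun ω : Fin n → Bool =>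
          ((crossCt e G ω v : ℝ)) < r ∧ ω (e v).1 = c)).card : ℝ)
        ≤ 2 ^ (n - 1) * Real.exp (-2 * t ^ 2 / ((Mset e G v).card : ℝ)) := by
    intro c
    set τ : Fin n → Bool := fun i => ((e (uch i)).2 == !(c == (e v).2)) with hτ
    have hsubset : (univ.filter (fun ω : Fin n → Bool =>
        ((crossCt e G ω v : ℝ)) < r ∧ ω (e v).1 = c))
        ⊆ (univ.filter (fun ω : Fin n → Bool => ω (e v).1 = c ∧
            (((Mset e G v).filter (fun i => ω i = τ i)).card : ℝ)
              ≤ ((Mset e G v).card : ℝ)/2 - t)) := by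
      intro ω hω
      obtain ⟨-, hbad, hc⟩ := Finset.mem_filter.1 hω
      refine Finset.mem_filter.2 ⟨Finset.mem_univ _, hc, ?_⟩
      have hXle := hsub ω hbad
      have hfeq : (Mset e G v).filter (fun i => ω i = τ i)
          = (Mset e G v).filter (fun i => ∃ u ∈ Pfib e G v i, inSb e ω u ≠ inSb e ω v) := by
        apply Finset.filter_congr
        intro i hi
        have humem := huchmem i hi
        have hpi : (e (uch i)).1 = i := (Finset.mem_filter.1 humem).2
        have hv : inSb e ω v = (c == (e v).2) := by
          simp only [inSb, hc]
        constructor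
        · intro h
          refine ⟨uch i, humem, ?_⟩
          rw [bool_ne_iff, hv]
          simp only [inSb, hpi]
          rw [bool_beq_eq]
          exact h
        · rintro ⟨u, hu, hopp⟩
          have hueq := huniq i hi u hu
          subst hueq
          rw [bool_ne_iff, hv] at hopp
          simp only [inSb, hpi] at hopp
          rw [bool_beq_eq] at hopp
          exact hopp
      rw [hfeq]
      simp only [Xct] at hXle
      exact hXle
    calc ((univ.filter (fun ω : Fin n → Bool =>
          ((crossCt e G ω v : ℝ)) < r ∧ ω (e v).1 = c)).card : ℝ)
        ≤ ((univ.filter (fun ω : Fin n → Bool => ω (e v).1 = c ∧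
            (((Mset e G v).filter (fun i => ω i = τ i)).card : ℝ)
              ≤ ((Mset e G v).card : ℝ)/2 - t)).card : ℝ) := by
          exact_mod_cast Finset.card_le_card hsubset
      _ ≤ 2 ^ (Fintype.card (Fin n) - 1) * Real.exp (-2*t^2/((Mset e G v).card : ℝ)) :=
          chernoff_count (Mset e G v) ((e v).1) hi₀M c τ t ht hm1
      _ = 2 ^ (n - 1) * Real.exp (-2 * t ^ 2 / ((Mset e G v).card : ℝ)) := by
          rw [Fintype.card_fin]
  -- split by the value of ω (e v).1
  have hsplit : (univ.filter (fun ω : Fin n → Bool => ((crossCt e G ω v : ℝ)) < r)).card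
      = (univ.filter (fun ω : Fin n → Bool =>
            ((crossCt e G ω v : ℝ)) < r ∧ ω (e v).1 = true)).card
        + (univ.filter (fun ω : Fin n → Bool =>
            ((crossCt e G ω v : ℝ)) < r ∧ ω (e v).1 = false)).card := by
    have h1 : (univ.filter (fun ω : Fin n → Bool =>
          ((crossCt e G ω v : ℝ)) < r ∧ ω (e v).1 = true))
        = (univ.filter (fun ω : Fin n → Bool =>
            ((crossCt e G ω v : ℝ)) < r)).filter (fun ω => ω (e v).1 = true) := by
      rw [Finset.filter_filter]
    have h2 : (univ.filter (fun ω : Fin n → Bool =>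
          ((crossCt e G ω v : ℝ)) < r ∧ ω (e v).1 = false))
        = (univ.filter (fun ω : Fin n → Bool =>
            ((crossCt e G ω v : ℝ)) < r)).filter (fun ω => ¬ (ω (e v).1 = true)) := by
      rw [Finset.filter_filter]
      apply Finset.filter_congr
      intro ω _
      simp [Bool.not_eq_true]
    rw [h1, h2, Finset.card_filter_add_card_filter_not]
  have h2n : (2:ℝ) ^ n = 2 * 2 ^ (n - 1) := by
    have hp : (2:ℝ) ^ (n - 1 + 1) = 2 ^ (n - 1) * 2 := pow_succ 2 (n - 1)
    have hn' : n - 1 + 1 = n := Nat.succ_pred_eq_of_pos (lt_of_lt_of_le Nat.zero_lt_one hn1)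
    rw [hn'] at hp
    rw [hp]; ring
  have hmono : Real.exp (-2 * t ^ 2 / (((Mset e G v).card : ℕ) : ℝ))
      ≤ Real.exp (-2 * t ^ 2 / (Δ : ℝ)) := by
    apply Real.exp_le_exp.2
    have hd : 2 * t ^ 2 / (Δ:ℝ) ≤ 2 * t ^ 2 / (((Mset e G v).card : ℕ) : ℝ) := by
      apply div_le_div_of_nonneg_left (by positivity) (by exact_mod_cast hm1)
        (by exact_mod_cast hΔm)
    have e1 : -2 * t ^ 2 / (((Mset e G v).card : ℕ):ℝ)
        = -(2 * t ^ 2 / (((Mset e G v).card : ℕ):ℝ)) := by ring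
    have e2 : -2 * t ^ 2 / (Δ:ℝ) = -(2 * t ^ 2 / (Δ:ℝ)) := by ring
    rw [e1, e2]
    linarith
  calc ((univ.filter (fun ω : Fin n → Bool => ((crossCt e G ω v : ℝ)) < r)).card : ℝ)
      = ((univ.filter (fun ω : Fin n → Bool =>
            ((crossCt e G ω v : ℝ)) < r ∧ ω (e v).1 = true)).card : ℝ)
        + ((univ.filter (fun ω : Fin n → Bool =>
            ((crossCt e G ω v : ℝ)) < r ∧ ω (e v).1 = false)).card : ℝ) := by
        rw [hsplit]; push_cast; ring
    _ ≤ 2 ^ (n - 1) * Real.exp (-2 * t ^ 2 / (((Mset e G v).card : ℕ) : ℝ))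
        + 2 ^ (n - 1) * Real.exp (-2 * t ^ 2 / (((Mset e G v).card : ℕ) : ℝ)) :=
        add_le_add (key true) (key false)
    _ = 2 ^ n * Real.exp (-2 * t ^ 2 / (((Mset e G v).card : ℕ) : ℝ)) := by
        rw [h2n]; ring
    _ ≤ 2 ^ n * Real.exp (-2 * t ^ 2 / (Δ : ℝ)) := by
        apply mul_le_mul_of_nonneg_left hmono (by positivity)
end BadCard

section Dep
variable {V : Type*} [Fintype V] {n : ℕ} (e : V ≃ Fin n × Bool) (G : SimpleGraph V)

noncomputable def vbl (v : V) : Finset (Fin n) :=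
  insert ((e v).1) ((G.neighborFinset v).image (fun u => (e u).1))

lemma cross_det (v : V) (ω ω' : Fin n → Bool) (hagree : ∀ j ∈ vbl e G v, ω j = ω' j) :
    crossCt e G ω v = crossCt e G ω' v := by
  simp only [crossCt]
  congr 1
  apply Finset.filter_congr
  intro u hu
  have h1 : inSb e ω u = inSb e ω' u := by
    simp only [inSb]
    rw [hagree ((e u).1) (Finset.mem_insert_of_mem (Finset.mem_image_of_mem _ hu))]
  have h2 : inSb e ω v = inSb e ω' v := by
    simp only [inSb]
    rw [hagree ((e v).1) (Finset.mem_insert_self _ _)]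
  rw [h1, h2]

lemma Mset_card_le (v : V) : (Mset e G v).card ≤ (G.neighborFinset v).card := by
  have h1 : (Mset e G v).card = ∑ i ∈ Mset e G v, (Pfib e G v i).card := by
    rw [Finset.sum_congr rfl (fun i hi => (Finset.mem_filter.1 hi).2.2)]
    simp
  rw [h1]
  have h2 : (G.neighborFinset v).card = ∑ i : Fin n, (Pfib e G v i).card :=
    Finset.card_eq_sum_card_fiberwise (fun u _ => Finset.mem_univ ((e u).1))
  rw [h2]
  exact Finset.sum_le_sum_of_subset (Finset.subset_univ _)

lemma vbl_card_le (Δ : ℕ) (hdegle : ∀ u : V, (G.neighborFinset u).card ≤ Δ) (v : V) :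
    (vbl e G v).card ≤ Δ + 1 := by
  calc (vbl e G v).card ≤ ((G.neighborFinset v).image (fun u => (e u).1)).card + 1 :=
        Finset.card_insert_le _ _
    _ ≤ (G.neighborFinset v).card + 1 := by
        have := Finset.card_image_le (s := G.neighborFinset v) (f := fun u => (e u).1)
        omega
    _ ≤ Δ + 1 := by have := hdegle v; omega

lemma vbl_mem_count (Δ : ℕ) (hdegle : ∀ u : V, (G.neighborFinset u).card ≤ Δ) (i : Fin n) :
    (univ.filter (fun l : V => i ∈ vbl e G l)).card ≤ 2 + 2 * Δ := by
  have hsub : (univ.filter (fun l : V => i ∈ vbl e G l))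
      ⊆ (univ.filter (fun u : V => (e u).1 = i))
        ∪ (univ.filter (fun u : V => (e u).1 = i)).biUnion (fun w => G.neighborFinset w) := by
    intro l hl
    have hil : i ∈ vbl e G l := (Finset.mem_filter.1 hl).2
    rcases Finset.mem_insert.1 hil with h | h
    · exact Finset.mem_union_left _ (Finset.mem_filter.2 ⟨Finset.mem_univ _, h.symm⟩)
    · obtain ⟨u, hu, hui⟩ := Finset.mem_image.1 h
      apply Finset.mem_union_right
      apply Finset.mem_biUnion.2
      refine ⟨u, Finset.mem_filter.2 ⟨Finset.mem_univ _, hui⟩, ?_⟩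
      rw [SimpleGraph.mem_neighborFinset] at hu ⊢
      exact hu.symm
  calc (univ.filter (fun l : V => i ∈ vbl e G l)).card
      ≤ ((univ.filter (fun u : V => (e u).1 = i))
          ∪ (univ.filter (fun u : V => (e u).1 = i)).biUnion (fun w => G.neighborFinset w)).card :=
        Finset.card_le_card hsub
    _ ≤ (univ.filter (fun u : V => (e u).1 = i)).card
        + ((univ.filter (fun u : V => (e u).1 = i)).biUnion (fun w => G.neighborFinset w)).card :=
        Finset.card_union_le _ _
    _ ≤ 2 + 2 * Δ := by
        have hb : ((univ.filter (fun u : V => (e u).1 = i)).biUnion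
            (fun w => G.neighborFinset w)).card ≤ 2 * Δ := by
          calc _ ≤ ∑ w ∈ univ.filter (fun u : V => (e u).1 = i), (G.neighborFinset w).card :=
                Finset.card_biUnion_le
            _ ≤ ∑ _w ∈ univ.filter (fun u : V => (e u).1 = i), Δ :=
                Finset.sum_le_sum (fun w _ => hdegle w)
            _ = 2 * Δ := by rw [Finset.sum_const, fiber_card e i, smul_eq_mul]
        have hf := fiber_card e i
        omega

lemma dep_card (Δ : ℕ) (hdegle : ∀ u : V, (G.neighborFinset u).card ≤ Δ) (v : V) :
    (univ.filter (fun l : V => l ≠ v ∧ (vbl e G v ∩ vbl e G l).Nonempty)).card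
      ≤ 2 * (Δ + 1) ^ 2 - 1 := by
  set B := (vbl e G v).biUnion (fun i => univ.filter (fun l : V => i ∈ vbl e G l)) with hB
  have hvB : v ∈ B := by
    apply Finset.mem_biUnion.2
    exact ⟨(e v).1, Finset.mem_insert_self _ _,
      Finset.mem_filter.2 ⟨Finset.mem_univ _, Finset.mem_insert_self _ _⟩⟩
  have hsub : (univ.filter (fun l : V => l ≠ v ∧ (vbl e G v ∩ vbl e G l).Nonempty))
      ⊆ B.erase v := by
    intro l hl
    obtain ⟨-, hlv, i, hi⟩ := Finset.mem_filter.1 hl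
    obtain ⟨hi1, hi2⟩ := Finset.mem_inter.1 hi
    refine Finset.mem_erase.2 ⟨hlv, Finset.mem_biUnion.2
      ⟨i, hi1, Finset.mem_filter.2 ⟨Finset.mem_univ _, hi2⟩⟩⟩
  have hBcard : B.card ≤ (Δ + 1) * (2 + 2 * Δ) := by
    calc B.card ≤ ∑ i ∈ vbl e G v, (univ.filter (fun l : V => i ∈ vbl e G l)).card :=
          Finset.card_biUnion_le
      _ ≤ ∑ _i ∈ vbl e G v, (2 + 2 * Δ) :=
          Finset.sum_le_sum (fun i _ => vbl_mem_count e G Δ hdegle i)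
      _ = (vbl e G v).card * (2 + 2 * Δ) := by rw [Finset.sum_const, smul_eq_mul]
      _ ≤ (Δ + 1) * (2 + 2 * Δ) :=
          Nat.mul_le_mul_right _ (vbl_card_le e G Δ hdegle v)
  have h1 := Finset.card_le_card hsub
  have h2 := Finset.card_erase_of_mem hvB
  have h3 : (Δ + 1) * (2 + 2 * Δ) = 2 * (Δ + 1) ^ 2 := by ring
  omega

end Dep


/-- every graph on 2n vertices with Δ(G) ≥ 3 admits an equipartition
V = V₁ ∪ V₂ with the bipartite subgraph between the parts having minimum degree at
least δ(G)/2 - 5√(Δ(G) ln Δ(G)). -/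
theorem stmt5 {V : Type*} [Fintype V] (G : SimpleGraph V) (n : ℕ)
    (hcard : Fintype.card V = 2 * n) (hDelta : 3 ≤ maxDeg G) :
    ∃ S : Set V, S.ncard = n ∧
      (minDeg G : ℝ) / 2 - 5 * Real.sqrt ((maxDeg G : ℝ) * Real.log (maxDeg G)) ≤
        (minDeg (bipartiteBetween G S) : ℝ) := by
  set Δ := maxDeg G with hΔdef
  set δ := minDeg G with hδdef
  set t : ℝ := 5 * Real.sqrt ((Δ : ℝ) * Real.log (Δ : ℝ)) with htdef
  by_cases htriv : (δ : ℝ) / 2 - t ≤ 0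
  · obtain ⟨s, -, hs⟩ := Finset.exists_subset_card_eq (s := (univ : Finset V)) (n := n)
      (by rw [Finset.card_univ, hcard]; omega)
    refine ⟨↑s, by rw [Set.ncard_coe_finset, hs], ?_⟩
    have hnn : (0:ℝ) ≤ (minDeg (bipartiteBetween G ↑s) : ℝ) := Nat.cast_nonneg _
    linarith
  push_neg at htriv
  have hVne : Nonempty V := by
    by_contra h
    rw [not_nonempty_iff] at h
    have h0 : Set.range (degN G) = ∅ := Set.range_eq_empty _
    have hz : Δ = 0 := by rw [hΔdef, maxDeg, h0]; simp
    rw [hz] at hDelta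
    exact absurd hDelta (by norm_num)
  have hn1 : 1 ≤ n := by
    have hpos := Fintype.card_pos_iff.2 hVne
    rw [hcard] at hpos
    omega
  have hV2 : Fintype.card V = Fintype.card (Fin n × Bool) := by
    rw [Fintype.card_prod, Fintype.card_fin, Fintype.card_bool, hcard]
    ring
  set e := Fintype.equivOfCardEq hV2 with hedef
  have hdegle : ∀ u : V, (G.neighborFinset u).card ≤ Δ := by
    intro u
    rw [← degN_eq_card]
    exact le_csSup (Set.Finite.bddAbove (Set.finite_range _)) (Set.mem_range_self u)
  have hδle : ∀ u : V, δ ≤ (G.neighborFinset u).card := by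
    intro u
    rw [← degN_eq_card]
    exact Nat.sInf_le (Set.mem_range_self u)
  have hΔ3 : 3 ≤ Δ := hDelta
  have hΔr : (3:ℝ) ≤ (Δ:ℝ) := by exact_mod_cast hΔ3
  have hlogpos : 0 < Real.log Δ := Real.log_pos (by linarith)
  have hzpos : 0 < (Δ:ℝ) * Real.log Δ := mul_pos (by linarith) hlogpos
  have ht : 0 < t := by
    have := Real.sqrt_pos.2 hzpos
    rw [htdef]
    linarith
  set D : ℕ := 2 * (Δ + 1) ^ 2 - 1 with hDdef
  set x : ℝ := 1 / (4 * ((Δ:ℝ) + 1) ^ 2) with hxdef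
  have hx0 : 0 < x := by rw [hxdef]; positivity
  have hx1 : x < 1 := by
    rw [hxdef, div_lt_one (by positivity)]
    nlinarith
  set A : V → Finset (Fin n → Bool) := fun v =>
    univ.filter (fun ω => ((crossCt e G ω v : ℕ):ℝ) < (δ:ℝ)/2 - t) with hAdef
  have hdet : ∀ v, ∀ ω ω' : Fin n → Bool,
      (∀ j ∈ vbl e G v, ω j = ω' j) → ω ∈ A v → ω' ∈ A v := by
    intro v ω ω' hagree hω
    simp only [hAdef, Finset.mem_filter, Finset.mem_univ, true_and] at hω ⊢
    rw [← cross_det e G v ω ω' hagree]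
    exact hω
  have hdeg : ∀ v : V,
      (univ.filter (fun l : V => l ≠ v ∧ (vbl e G v ∩ vbl e G l).Nonempty)).card ≤ D :=
    fun v => dep_card e G Δ hdegle v
  have hΔne : ((Δ:ℝ)) ≠ 0 := by linarith
  have ht2 : t ^ 2 = 25 * ((Δ:ℝ) * Real.log Δ) := by
    rw [htdef, mul_pow, Real.sq_sqrt (le_of_lt hzpos)]
    norm_num
  have hexp : Real.exp (-2 * t ^ 2 / (Δ:ℝ)) = 1 / ((Δ:ℝ))^50 := by
    have harg : -2 * t ^ 2 / (Δ:ℝ) = -(50 * Real.log Δ) := by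
      rw [ht2]
      rw [show (-2:ℝ) * (25 * ((Δ:ℝ) * Real.log Δ)) = (-(50 * Real.log Δ)) * (Δ:ℝ) by ring]
      exact mul_div_cancel_right₀ _ hΔne
    rw [harg, Real.exp_neg]
    rw [show (50:ℝ) * Real.log Δ = ((50:ℕ):ℝ) * Real.log Δ by norm_num]
    rw [Real.exp_nat_mul, Real.exp_log (by linarith)]
    rw [one_div]
  have h1D : (1:ℕ) ≤ 2*(Δ+1)^2 := by
    have h := Nat.one_le_pow 2 (Δ+1) (by omega)
    omega
  have hnumer : 1 / ((Δ:ℝ))^50 ≤ x * (1 - x) ^ D := by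
    have hDle : (D:ℝ) ≤ 2 * ((Δ:ℝ) + 1)^2 := by
      rw [hDdef]
      push_cast [h1D]
      linarith
    have hber : (1:ℝ) - (D:ℝ) * x ≤ (1 - x) ^ D := by
      have hb := one_add_mul_le_pow (a := -x) (by linarith) D
      have he1 : (1:ℝ) + (-x) = 1 - x := by ring
      rw [he1] at hb
      calc (1:ℝ) - (D:ℝ)*x = 1 + (D:ℝ)*(-x) := by ring
        _ ≤ (1 - x)^D := hb
    have heq : 2*((Δ:ℝ)+1)^2 * x = 1/2 := by
      rw [hxdef, mul_one_div]
      rw [div_eq_div_iff (by positivity) (by norm_num)]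
      ring
    have hDx : (D:ℝ) * x ≤ 1/2 := by
      have h := mul_le_mul_of_nonneg_right hDle (le_of_lt hx0)
      linarith
    have hhalf : (1:ℝ)/2 ≤ (1 - x)^D := by linarith
    have hxhalf : 1/(8*((Δ:ℝ)+1)^2) ≤ x * (1-x)^D := by
      have he2 : 1/(8*((Δ:ℝ)+1)^2) = x * (1/2) := by
        rw [hxdef, mul_one_div, div_div]
        ring_nf
      rw [he2]
      exact mul_le_mul_of_nonneg_left hhalf (le_of_lt hx0)
    refine le_trans ?_ hxhalf
    apply one_div_le_one_div_of_le (by positivity)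
    have hnat : 8 * (Δ + 1)^2 ≤ Δ^50 := by
      have h1 : Δ + 1 ≤ Δ^2 := by nlinarith
      have h2 : (Δ+1)^2 ≤ (Δ^2)^2 := Nat.pow_le_pow_left h1 2
      have h3 : 8 ≤ Δ^2 := by nlinarith
      calc 8 * (Δ+1)^2 ≤ Δ^2 * (Δ^2)^2 := Nat.mul_le_mul h3 h2
        _ = Δ^6 := by ring
        _ ≤ Δ^50 := Nat.pow_le_pow_right (by omega) (by omega)
    calc 8*((Δ:ℝ)+1)^2 = ((8 * (Δ + 1)^2 : ℕ) : ℝ) := by push_cast; ring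
      _ ≤ ((Δ^50 : ℕ):ℝ) := by exact_mod_cast hnat
      _ = ((Δ:ℝ))^50 := by push_cast; ring
  have hp : ∀ v, ((A v).card : ℝ) ≤ x * (1-x)^D * 2 ^ (Fintype.card (Fin n)) := by
    intro v
    have hbc := bad_card e G v t ht ((δ:ℝ)/2 - t)
      (by
        have hc := hδle v
        have hcast : (δ:ℝ) ≤ ((G.neighborFinset v).card : ℝ) := by exact_mod_cast hc
        linarith)
      Δ (le_trans (Mset_card_le e G v) (hdegle v)) (lt_of_lt_of_le (by norm_num) hΔ3)
    calc ((A v).card : ℝ)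
        ≤ 2 ^ n * Real.exp (-2*t^2/(Δ:ℝ)) := hbc
      _ = 2 ^ n * (1/((Δ:ℝ))^50) := by rw [hexp]
      _ ≤ 2 ^ n * (x * (1-x)^D) :=
          mul_le_mul_of_nonneg_left hnumer (by positivity)
      _ = x * (1-x)^D * 2 ^ (Fintype.card (Fin n)) := by
          rw [Fintype.card_fin]; ring
  obtain ⟨ω, hω⟩ := lll A (vbl e G) hdet x hx0 hx1 D hdeg hp
  refine ⟨{u : V | inSb e ω u = true}, ?_, ?_⟩
  · have hSeq : {u : V | inSb e ω u = true}
        = ↑(univ.filter (fun v : V => inSb e ω v = true)) := by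
      ext u; simp
    rw [hSeq, Set.ncard_coe_finset, balanced e ω]
  · have hrange : (Set.range (degN (bipartiteBetween G {u : V | inSb e ω u = true}))).Nonempty :=
      Set.range_nonempty _
    obtain ⟨v₀, hv₀⟩ := Nat.sInf_mem hrange
    have hv₀' : minDeg (bipartiteBetween G {u : V | inSb e ω u = true}) = crossCt e G ω v₀ := by
      rw [minDeg, ← hv₀, degN_bipartite]
    rw [hv₀']
    have hnb := hω v₀
    simp only [hAdef, Finset.mem_filter, Finset.mem_univ, true_and, not_lt] at hnb
    exact hnb
end
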